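/- arXiv:math/0109008 — 5 statements merged into one kernel-verified Lean document; each statement's English description precedes it below -/
import Mathlib

section
/- Let T and F be nonnegative n×n matrices with ρ(T) < 1, F ≠ 0, and P = T + F irreducible. Let s > ρ(T) and define q(s) = ρ(F(I−T/s)^{-1})/s. Then q(s) > 0 and ρ(T + F/q(s)) = s. -/
open Matrix Filter Topology
open scoped ENNReal NNReal

variable {n : ℕ}

attribute [local instance] Matrix.linftyOpNormedAddCommGroup Matrix.linftyOpNormedRing
  Matrix.linftyOpNormedAlgebra Matrix.linftyOpNormedSpace

noncomputable local instance : CompleteSpace (Matrix (Fin n) (Fin n) ℂ) :=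
  FiniteDimensional.complete ℂ _

noncomputable def sig {n : ℕ} (A : Matrix (Fin n) (Fin n) ℝ) : ℝ≥0∞ :=
  spectralRadius ℂ (A.map Complex.ofReal)

lemma map_pow' (A : Matrix (Fin n) (Fin n) ℝ) (m : ℕ) :
    (A.map Complex.ofReal) ^ m = (A ^ m).map Complex.ofReal := by
  have := (map_pow (RingHom.mapMatrix (m := Fin n) Complex.ofRealHom) A m).symm
  exact this

lemma nnnorm_map_cplx (A : Matrix (Fin n) (Fin n) ℝ) : ‖A.map Complex.ofReal‖₊ = ‖A‖₊ := by
  simp only [Matrix.linfty_opNNNorm_def, Matrix.map_apply, Complex.nnnorm_real]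

/-- Gelfand's formula for real matrices. -/
lemma sig_gelfand (A : Matrix (Fin n) (Fin n) ℝ) :
    Tendsto (fun m : ℕ => (‖A ^ m‖₊ : ℝ≥0∞) ^ (1 / m : ℝ)) atTop (𝓝 (sig A)) := by
  have h := spectrum.pow_nnnorm_pow_one_div_tendsto_nhds_spectralRadius (A.map Complex.ofReal)
  simp only [map_pow', nnnorm_map_cplx] at h
  exact h

lemma sig_ne_top (A : Matrix (Fin n) (Fin n) ℝ) : sig A ≠ ⊤ := by
  refine ne_top_of_le_ne_top (ENNReal.mul_ne_top ?_ ?_)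
    (spectrum.spectralRadius_le_pow_nnnorm_pow_one_div ℂ (A.map Complex.ofReal) 0) <;>
  exact ENNReal.rpow_ne_top_of_nonneg (by norm_num) ENNReal.coe_ne_top

section orderfacts
variable {A B A' B' : Matrix (Fin n) (Fin n) ℝ}

lemma mul_nn (hA : ∀ i j, 0 ≤ A i j) (hB : ∀ i j, 0 ≤ B i j) : ∀ i j, 0 ≤ (A * B) i j := by
  intro i j
  rw [Matrix.mul_apply]
  exact Finset.sum_nonneg fun k _ => mul_nonneg (hA i k) (hB k j)

lemma mul_mono (hA : ∀ i j, 0 ≤ A i j) (hAA : ∀ i j, A i j ≤ A' i j)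
    (hB : ∀ i j, 0 ≤ B i j) (hBB : ∀ i j, B i j ≤ B' i j) :
    ∀ i j, (A * B) i j ≤ (A' * B') i j := by
  intro i j
  rw [Matrix.mul_apply, Matrix.mul_apply]
  exact Finset.sum_le_sum fun k _ =>
    mul_le_mul (hAA i k) (hBB k j) (hB k j) ((hA i k).trans (hAA i k))

lemma pow_nn (hA : ∀ i j, 0 ≤ A i j) (m : ℕ) : ∀ i j, 0 ≤ (A ^ m) i j := by
  induction m with
  | zero => intro i j; rw [pow_zero]; by_cases h : i = j <;> simp [Matrix.one_apply, h]
  | succ m ih => rw [pow_succ]; exact mul_nn ih hA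

lemma pow_mono (hA : ∀ i j, 0 ≤ A i j) (hAB : ∀ i j, A i j ≤ B i j) (m : ℕ) :
    ∀ i j, (A ^ m) i j ≤ (B ^ m) i j := by
  induction m with
  | zero => intro i j; rw [pow_zero]; exact le_refl _
  | succ m ih => rw [pow_succ, pow_succ]; exact mul_mono (pow_nn hA m) ih hA hAB

lemma entry_mul_ge (hA : ∀ i j, 0 ≤ A i j) (hB : ∀ i j, 0 ≤ B i j) (i k j : Fin n) :
    A i k * B k j ≤ (A * B) i j := by
  rw [Matrix.mul_apply]
  exact Finset.single_le_sum (fun l _ => mul_nonneg (hA i l) (hB l j)) (Finset.mem_univ k)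

lemma nnnorm_entry_mono (h : ∀ i j, |A i j| ≤ B i j) : ‖A‖₊ ≤ ‖B‖₊ := by
  rw [Matrix.linfty_opNNNorm_def, Matrix.linfty_opNNNorm_def]
  refine Finset.sup_mono_fun fun i _ => Finset.sum_le_sum fun j _ => ?_
  have : ‖A i j‖ ≤ ‖B i j‖ := by
    rw [Real.norm_eq_abs, Real.norm_eq_abs]
    exact (h i j).trans (le_abs_self _)
  exact this

lemma entry_le_nnnorm (A : Matrix (Fin n) (Fin n) ℝ) (i j : Fin n) : |A i j| ≤ ‖A‖ := by
  have h1 : ‖A i j‖₊ ≤ ∑ k, ‖A i k‖₊ :=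
    Finset.single_le_sum (f := fun k => ‖A i k‖₊) (fun k _ => zero_le) (Finset.mem_univ j)
  have h2 : (∑ k, ‖A i k‖₊) ≤ ‖A‖₊ := by
    rw [Matrix.linfty_opNNNorm_def]
    exact Finset.le_sup (f := fun i => ∑ k, ‖A i k‖₊) (Finset.mem_univ i)
  calc |A i j| = ‖A i j‖ := (Real.norm_eq_abs _).symm
    _ ≤ ‖A‖ := by exact_mod_cast h1.trans h2

end orderfacts

lemma sig_mono {A B : Matrix (Fin n) (Fin n) ℝ} (hA : ∀ i j, 0 ≤ A i j)
    (hAB : ∀ i j, A i j ≤ B i j) : sig A ≤ sig B := by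
  refine le_of_tendsto_of_tendsto' (sig_gelfand A) (sig_gelfand B) fun m => ?_
  refine ENNReal.rpow_le_rpow (ENNReal.coe_le_coe.mpr (nnnorm_entry_mono fun i j => ?_))
    (by positivity)
  rw [abs_of_nonneg (pow_nn hA m i j)]
  exact pow_mono hA hAB m i j

lemma sig_smul (c : ℝ) (A : Matrix (Fin n) (Fin n) ℝ) :
    sig (c • A) = (‖c‖₊ : ℝ≥0∞) * sig A := by
  refine tendsto_nhds_unique (sig_gelfand (c • A)) ?_
  have h1 : Tendsto (fun m : ℕ => (‖c‖₊ : ℝ≥0∞) * (‖A ^ m‖₊ : ℝ≥0∞) ^ (1 / m : ℝ)) atTop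
      (𝓝 ((‖c‖₊ : ℝ≥0∞) * sig A)) :=
    ENNReal.Tendsto.const_mul (sig_gelfand A) (Or.inr ENNReal.coe_ne_top)
  refine h1.congr' ?_
  filter_upwards [eventually_gt_atTop 0] with m hm
  rw [smul_pow, nnnorm_smul, ENNReal.coe_mul, ENNReal.mul_rpow_of_nonneg _ _ (by positivity)]
  congr 1
  rw [nnnorm_pow, ENNReal.coe_pow, ← ENNReal.rpow_natCast ((‖c‖₊ : ℝ≥0∞)) m,
    ← ENNReal.rpow_mul, mul_one_div, div_self (by exact_mod_cast hm.ne' : (m:ℝ) ≠ 0),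
    ENNReal.rpow_one]

lemma tendsto_rpow_one_div_nat {E : ℝ≥0∞} (hE1 : 1 ≤ E) (hEtop : E ≠ ⊤) :
    Tendsto (fun m : ℕ => E ^ (1 / m : ℝ)) atTop (𝓝 1) := by
  set e := E.toReal with he
  have he1 : 1 ≤ e := by
    rw [he, ← ENNReal.toReal_one]
    exact ENNReal.toReal_mono hEtop hE1
  have hepos : 0 < e := lt_of_lt_of_le one_pos he1
  have hE : E = ENNReal.ofReal e := by rw [he, ENNReal.ofReal_toReal hEtop]
  have hreal : Tendsto (fun m : ℕ => e ^ (1 / m : ℝ)) atTop (𝓝 1) := by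
    have h0 : Tendsto (fun m : ℕ => Real.log e * (1 / m : ℝ)) atTop (𝓝 0) := by
      simpa using (tendsto_one_div_atTop_nhds_zero_nat).const_mul (Real.log e)
    have h2 := (Real.continuous_exp.tendsto 0).comp h0
    rw [Real.exp_zero] at h2
    refine h2.congr fun m => ?_
    rw [Function.comp_apply, ← Real.exp_log hepos, ← Real.exp_mul, Real.exp_log hepos]
  have h3 := ENNReal.tendsto_ofReal hreal
  rw [ENNReal.ofReal_one] at h3
  refine h3.congr fun m => ?_
  rw [hE, ENNReal.ofReal_rpow_of_pos hepos]

lemma nnnorm_le_of_abs_le {x C : ℝ} (h : |x| ≤ C) : ‖x‖₊ ≤ ‖C‖₊ := by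
  have : ‖x‖ ≤ ‖C‖ := by
    rw [Real.norm_eq_abs, Real.norm_eq_abs]
    exact h.trans (le_abs_self _)
  exact this

lemma sig_le_one_of_bounded {A : Matrix (Fin n) (Fin n) ℝ} (C : ℝ)
    (h : ∀ m i j, |(A ^ m) i j| ≤ C) : sig A ≤ 1 := by
  set E : ℝ≥0∞ := 1 + (n : ℝ≥0∞) * (‖C‖₊ : ℝ≥0∞) with hEdef
  have hEtop : E ≠ ⊤ :=
    ENNReal.add_ne_top.mpr ⟨ENNReal.one_ne_top,
      ENNReal.mul_ne_top (ENNReal.natCast_ne_top n) ENNReal.coe_ne_top⟩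
  have hE1 : 1 ≤ E := le_add_of_nonneg_right zero_le
  have hbound : ∀ m : ℕ, (‖A ^ m‖₊ : ℝ≥0∞) ≤ E := by
    intro m
    have h1 : ‖A ^ m‖₊ ≤ (n : ℝ≥0) * ‖C‖₊ := by
      rw [Matrix.linfty_opNNNorm_def]
      refine Finset.sup_le fun i _ => ?_
      calc (∑ j, ‖(A ^ m) i j‖₊) ≤ ∑ _j : Fin n, ‖C‖₊ :=
            Finset.sum_le_sum fun j _ => nnnorm_le_of_abs_le (h m i j)
        _ = (n : ℝ≥0) * ‖C‖₊ := by simp [mul_comm]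
    calc (‖A ^ m‖₊ : ℝ≥0∞) ≤ (((n : ℝ≥0) * ‖C‖₊ : ℝ≥0) : ℝ≥0∞) := ENNReal.coe_le_coe.mpr h1
      _ ≤ E := by
          rw [hEdef, ENNReal.coe_mul, ENNReal.coe_natCast]
          exact le_add_of_nonneg_of_le zero_le le_rfl
  refine le_of_tendsto_of_tendsto' (sig_gelfand A) (tendsto_rpow_one_div_nat hE1 hEtop)
    fun m => ENNReal.rpow_le_rpow (hbound m) (by positivity)

lemma sig_diag_lower {A : Matrix (Fin n) (Fin n) ℝ} (hA : ∀ i j, 0 ≤ A i j) (i : Fin n)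
    {K : ℕ} (hK : 0 < K) {t : ℝ} (ht0 : 0 ≤ t) (ht : t ^ K ≤ (A ^ K) i i) :
    ENNReal.ofReal t ≤ sig A := by
  -- powers of the diagonal entry
  have hpow : ∀ m : ℕ, t ^ (K * m) ≤ (A ^ (K * m)) i i := by
    intro m
    induction m with
    | zero => simp [Matrix.one_apply]
    | succ m ih =>
        have h1 : A ^ (K * (m + 1)) = A ^ (K * m) * A ^ K := by
          rw [← pow_add]; ring_nf
        rw [h1, mul_add, mul_one, pow_add]
        calc t ^ (K * m) * t ^ K ≤ (A ^ (K * m)) i i * (A ^ K) i i :=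
              mul_le_mul ih ht (by positivity) ((pow_nn hA _) i i)
          _ ≤ (A ^ (K * m) * A ^ K) i i := entry_mul_ge (pow_nn hA _) (pow_nn hA _) i i i
  -- Gelfand along the subsequence K*m
  have hsub : Tendsto (fun m : ℕ => K * m) atTop atTop :=
    tendsto_atTop_atTop_of_monotone (fun a b hab => Nat.mul_le_mul_left K hab)
      (fun b => ⟨b, Nat.le_mul_of_pos_left b hK⟩)
  have hg : Tendsto (fun m : ℕ => (‖A ^ (K * m)‖₊ : ℝ≥0∞) ^ (1 / (K * m : ℕ) : ℝ)) atTop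
      (𝓝 (sig A)) := (sig_gelfand A).comp hsub
  refine ge_of_tendsto hg ?_
  filter_upwards [eventually_gt_atTop 0] with m hm
  have hKm : 0 < K * m := Nat.mul_pos hK hm
  have hentry : ENNReal.ofReal (t ^ (K * m)) ≤ (‖A ^ (K * m)‖₊ : ℝ≥0∞) := by
    have h2 : t ^ (K * m) ≤ ‖A ^ (K * m)‖ :=
      (hpow m).trans ((le_abs_self _).trans (entry_le_nnnorm _ i i))
    calc ENNReal.ofReal (t ^ (K * m)) ≤ ENNReal.ofReal ‖A ^ (K * m)‖ := ENNReal.ofReal_le_ofReal h2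
      _ = (‖A ^ (K * m)‖₊ : ℝ≥0∞) := ENNReal.ofReal_coe_nnreal ▸ by
            rw [← coe_nnnorm, ENNReal.ofReal_coe_nnreal]
  calc ENNReal.ofReal t
      = (ENNReal.ofReal (t ^ (K * m))) ^ (1 / (K * m : ℕ) : ℝ) := by
        rw [ENNReal.ofReal_pow ht0, ← ENNReal.rpow_natCast (ENNReal.ofReal t) (K * m),
          ← ENNReal.rpow_mul, mul_one_div, div_self (by exact_mod_cast hKm.ne' : ((K * m : ℕ) : ℝ) ≠ 0),
          ENNReal.rpow_one]
    _ ≤ (‖A ^ (K * m)‖₊ : ℝ≥0∞) ^ (1 / (K * m : ℕ) : ℝ) :=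
        ENNReal.rpow_le_rpow hentry (by positivity)

lemma sig_entry_decay {A : Matrix (Fin n) (Fin n) ℝ} {r : ℝ} (hr : 0 < r)
    (h : sig A < ENNReal.ofReal r) : ∀ᶠ m in atTop, ∀ i j, |(A ^ m) i j| ≤ r ^ m := by
  have hev : ∀ᶠ m : ℕ in atTop, (‖A ^ m‖₊ : ℝ≥0∞) ^ (1 / m : ℝ) < ENNReal.ofReal r :=
    (sig_gelfand A).eventually_lt_const h
  filter_upwards [hev, eventually_gt_atTop 0] with m hm hm0 i j
  have h1 : (‖A ^ m‖₊ : ℝ≥0∞) < ENNReal.ofReal (r ^ m) := by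
    have h1' := ENNReal.rpow_lt_rpow hm (by exact_mod_cast hm0 : (0:ℝ) < m)
    rwa [← ENNReal.rpow_mul, one_div_mul_cancel (by exact_mod_cast hm0.ne' : (m:ℝ) ≠ 0),
      ENNReal.rpow_one, ENNReal.rpow_natCast, ← ENNReal.ofReal_pow hr.le] at h1'
  have h2 : ‖A ^ m‖ < r ^ m := by
    have := (ENNReal.toReal_lt_toReal ENNReal.coe_ne_top ENNReal.ofReal_ne_top).mpr h1
    rwa [ENNReal.coe_toReal, coe_nnnorm, ENNReal.toReal_ofReal (by positivity)] at this
  exact (entry_le_nnnorm _ i j).trans h2.le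

lemma map_sub_one (N : Matrix (Fin n) (Fin n) ℝ) :
    (1 - N).map Complex.ofReal = 1 - N.map Complex.ofReal := by
  ext i j
  by_cases h : i = j <;>
    simp [Matrix.map_apply, Matrix.sub_apply, Matrix.one_apply, h]

/-- Neumann-type lemma: if `N` is nonnegative with spectral radius `< 1`, then `1 - N`
has a nonnegative two-sided inverse. -/
lemma neumann {N : Matrix (Fin n) (Fin n) ℝ} (hN : ∀ i j, 0 ≤ N i j) (hσ : sig N < 1) :
    ∃ S : Matrix (Fin n) (Fin n) ℝ,
      (∀ i j, 0 ≤ S i j) ∧ (1 - N) * S = 1 ∧ S * (1 - N) = 1 := by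
  -- invertibility over ℂ, hence over ℝ
  have hunitC : IsUnit (1 - N.map Complex.ofReal) := by
    have h1 : spectralRadius ℂ (N.map Complex.ofReal) < ‖(1 : ℂ)‖₊ := by
      rw [nnnorm_one, ENNReal.coe_one]; exact hσ
    have h2 := spectrum.mem_resolventSet_of_spectralRadius_lt h1
    rw [spectrum.mem_resolventSet_iff] at h2
    simpa using h2
  have hdet : IsUnit (1 - N).det := by
    have h3 : IsUnit ((1 - N).map Complex.ofReal).det := by
      rw [map_sub_one]; exact (Matrix.isUnit_iff_isUnit_det _).mp hunitC
    have h4 : ((1 - N).map Complex.ofReal).det = Complex.ofReal ((1 - N).det) := by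
      rw [show ((1 - N).map Complex.ofReal) = Complex.ofRealHom.mapMatrix (1 - N) from rfl,
        ← RingHom.map_det]
      rfl
    rw [h4, isUnit_iff_ne_zero, ne_eq, Complex.ofReal_eq_zero] at h3
    exact isUnit_iff_ne_zero.mpr h3
  refine ⟨(1 - N)⁻¹, ?_, Matrix.mul_nonsing_inv _ hdet, Matrix.nonsing_inv_mul _ hdet⟩
  -- nonnegativity of the inverse via partial geometric sums
  set S := (1 - N)⁻¹ with hS
  have hmulS : (1 - N) * S = 1 := Matrix.mul_nonsing_inv _ hdet
  intro i j
  have hkey : ∀ m : ℕ, S i j = (∑ k ∈ Finset.range m, N ^ k) i j + (N ^ m * S) i j := by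
    intro m
    have h4 : (∑ k ∈ Finset.range m, N ^ k) * (1 - N) = 1 - N ^ m := by
      have := geom_sum_mul N m
      calc (∑ k ∈ Finset.range m, N ^ k) * (1 - N)
          = -((∑ k ∈ Finset.range m, N ^ k) * (N - 1)) := by
            rw [← neg_sub N 1, mul_neg]
        _ = -(N ^ m - 1) := by rw [this]
        _ = 1 - N ^ m := neg_sub _ _
    have h5 : (∑ k ∈ Finset.range m, N ^ k) = S - N ^ m * S := by
      have h6 : ((∑ k ∈ Finset.range m, N ^ k) * (1 - N)) * S = (1 - N ^ m) * S := by rw [h4]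
      rw [mul_assoc, hmulS, mul_one, sub_mul, one_mul] at h6
      exact h6
    have := congrArg (fun X => X i j) h5
    simp only [Matrix.sub_apply] at this
    linarith [this]
  -- the remainder tends to zero
  set ρ := (sig N).toReal with hρ
  have hρ1 : ρ < 1 := by
    rw [hρ, ← ENNReal.toReal_one]
    exact ENNReal.toReal_strict_mono ENNReal.one_ne_top hσ
  set r := (ρ + 1) / 2 with hr
  have hr0 : 0 < r := by
    have : 0 ≤ ρ := ENNReal.toReal_nonneg
    rw [hr]; linarith
  have hr1 : r < 1 := by rw [hr]; linarith
  have hσr : sig N < ENNReal.ofReal r := by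
    have : sig N = ENNReal.ofReal ρ := by rw [hρ, ENNReal.ofReal_toReal (sig_ne_top N)]
    rw [this]
    exact (ENNReal.ofReal_lt_ofReal_iff hr0).mpr (by rw [hr]; linarith)
  have hdecay := sig_entry_decay hr0 hσr
  have hrem : Tendsto (fun m => (N ^ m * S) i j) atTop (𝓝 0) := by
    set C : ℝ := ∑ k, |S k j| with hC
    refine squeeze_zero_norm' (a := fun m => r ^ m * C) ?_ ?_
    · filter_upwards [hdecay] with m hm
      rw [Real.norm_eq_abs, Matrix.mul_apply]
      calc |∑ k, (N ^ m) i k * S k j| ≤ ∑ k, |(N ^ m) i k * S k j| := Finset.abs_sum_le_sum_abs _ _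
        _ ≤ ∑ k, r ^ m * |S k j| := by
            refine Finset.sum_le_sum fun k _ => ?_
            rw [abs_mul]
            exact mul_le_mul_of_nonneg_right (hm i k) (abs_nonneg _)
        _ = r ^ m * C := by rw [hC, Finset.mul_sum]
    · have := (tendsto_pow_atTop_nhds_zero_of_lt_one hr0.le hr1).mul_const C
      simpa using this
  have htend : Tendsto (fun m => (∑ k ∈ Finset.range m, N ^ k) i j) atTop (𝓝 (S i j)) := by
    have h7 : Tendsto (fun m => S i j - (N ^ m * S) i j) atTop (𝓝 (S i j - 0)) :=
      tendsto_const_nhds.sub hrem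
    rw [sub_zero] at h7
    refine h7.congr fun m => by linarith [hkey m]
  refine ge_of_tendsto' htend fun m => ?_
  have : ∀ k, 0 ≤ (N ^ k) i j := fun k => pow_nn hN k i j
  have h8 : (∑ k ∈ Finset.range m, N ^ k) i j = ∑ k ∈ Finset.range m, (N ^ k) i j := by
    simp [Matrix.sum_apply]
  rw [h8]
  exact Finset.sum_nonneg fun k _ => this k

lemma resolvent_ex {T : Matrix (Fin n) (Fin n) ℝ} (hT : ∀ i j, 0 ≤ T i j) {t : ℝ} (ht : 0 < t)
    (hσ : sig T < ENNReal.ofReal t) :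
    ∃ R : Matrix (Fin n) (Fin n) ℝ,
      (∀ i j, 0 ≤ R i j) ∧ (t • 1 - T) * R = 1 ∧ R * (t • 1 - T) = 1 := by
  have hN : ∀ i j, 0 ≤ (t⁻¹ • T) i j := fun i j =>
    mul_nonneg (inv_nonneg.mpr ht.le) (hT i j)
  have hσN : sig (t⁻¹ • T) < 1 := by
    rw [sig_smul]
    have h1 : (‖t⁻¹‖₊ : ℝ≥0∞) = ENNReal.ofReal t⁻¹ := by
      rw [← Real.enorm_eq_ofReal (inv_nonneg.mpr ht.le), enorm_eq_nnnorm]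
    rw [h1]
    calc ENNReal.ofReal t⁻¹ * sig T < ENNReal.ofReal t⁻¹ * ENNReal.ofReal t := by
          rw [ENNReal.mul_lt_mul_iff_right (by simp [ht, ht.le]) ENNReal.ofReal_ne_top]
          exact hσ
      _ = 1 := by
          rw [← ENNReal.ofReal_mul (inv_nonneg.mpr ht.le), inv_mul_cancel₀ ht.ne',
            ENNReal.ofReal_one]
  obtain ⟨V, hV0, hV1, hV2⟩ := neumann hN hσN
  have hfact : t • (1 : Matrix (Fin n) (Fin n) ℝ) - T = t • (1 - t⁻¹ • T) := by
    rw [smul_sub, smul_smul, mul_inv_cancel₀ ht.ne', one_smul]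
  refine ⟨t⁻¹ • V, fun i j => mul_nonneg (inv_nonneg.mpr ht.le) (hV0 i j), ?_, ?_⟩
  · rw [hfact, Matrix.smul_mul, Matrix.mul_smul, smul_smul, mul_inv_cancel₀ ht.ne', one_smul, hV1]
  · rw [hfact, Matrix.smul_mul, Matrix.mul_smul, smul_smul, inv_mul_cancel₀ ht.ne', one_smul, hV2]

/-- Resolvent comparison: for `s ≤ t`, `t • R_t ≤ s • R_s` entrywise. -/
lemma resolvent_cmp {T Rs Rt : Matrix (Fin n) (Fin n) ℝ} (hT : ∀ i j, 0 ≤ T i j)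
    {s t : ℝ} (hst : s ≤ t)
    (hRs0 : ∀ i j, 0 ≤ Rs i j) (hRs : Rs * (s • 1 - T) = 1)
    (hRt0 : ∀ i j, 0 ≤ Rt i j) (hRt : (t • 1 - T) * Rt = 1) :
    ∀ i j, (t • Rt) i j ≤ (s • Rs) i j := by
  have key : s • Rs - t • Rt = (t - s) • (Rs * T * Rt) := by
    have e1 : Rs * (s • ((t • (1 : Matrix (Fin n) (Fin n) ℝ)) - T)) * Rt = s • Rs := by
      rw [Matrix.mul_smul, Matrix.smul_mul, mul_assoc, hRt, mul_one]
    have e2 : Rs * (t • ((s • (1 : Matrix (Fin n) (Fin n) ℝ)) - T)) * Rt = t • Rt := by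
      rw [Matrix.mul_smul, Matrix.smul_mul, hRs, one_mul]
    have e3 : s • ((t • (1 : Matrix (Fin n) (Fin n) ℝ)) - T)
        - t • ((s • (1 : Matrix (Fin n) (Fin n) ℝ)) - T) = (t - s) • T := by
      rw [smul_sub, smul_sub, smul_smul, smul_smul, mul_comm s t, sub_smul]
      abel
    calc s • Rs - t • Rt
        = Rs * (s • ((t • (1 : Matrix (Fin n) (Fin n) ℝ)) - T)) * Rt
          - Rs * (t • ((s • (1 : Matrix (Fin n) (Fin n) ℝ)) - T)) * Rt := by rw [e1, e2]
      _ = Rs * (s • ((t • (1 : Matrix (Fin n) (Fin n) ℝ)) - T)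
          - t • ((s • (1 : Matrix (Fin n) (Fin n) ℝ)) - T)) * Rt := by
          rw [Matrix.mul_sub, Matrix.sub_mul]
      _ = (t - s) • (Rs * T * Rt) := by
          rw [e3, Matrix.mul_smul, Matrix.smul_mul]
  intro i j
  have h4 := congrArg (fun X => X i j) key
  simp only [Matrix.sub_apply, Matrix.smul_apply, smul_eq_mul] at h4
  have h5 : 0 ≤ (t - s) * (Rs * T * Rt) i j :=
    mul_nonneg (sub_nonneg.mpr hst) ((mul_nn (mul_nn hRs0 hT) hRt0) i j)
  simp only [Matrix.smul_apply, smul_eq_mul]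
  linarith

lemma geom_bounded_of_fixed {X W : Matrix (Fin n) (Fin n) ℝ} (hX : ∀ i j, 0 ≤ X i j)
    (hW0 : ∀ i j, 0 ≤ W i j) (hfix : 1 + X * W = W) :
    ∀ m i j, (∑ k ∈ Finset.range m, X ^ k) i j ≤ W i j := by
  intro m
  induction m with
  | zero => intro i j; simpa using hW0 i j
  | succ m ih =>
      intro i j
      have hrec : (∑ k ∈ Finset.range (m + 1), X ^ k) = 1 + X * (∑ k ∈ Finset.range m, X ^ k) := by
        rw [geom_sum_succ]
        abel
      have hQ0 : ∀ i j, 0 ≤ (∑ k ∈ Finset.range m, X ^ k) i j := by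
        intro i j
        rw [Matrix.sum_apply]
        exact Finset.sum_nonneg fun k _ => pow_nn hX k i j
      have h1 : (X * (∑ k ∈ Finset.range m, X ^ k)) i j ≤ (X * W) i j :=
        mul_mono hX (fun i j => le_refl _) hQ0 ih i j
      have h2 := congrArg (fun Y => Y i j) hrec
      have h3 := congrArg (fun Y => Y i j) hfix
      simp only [Matrix.add_apply] at h2 h3
      linarith

/-- Terms of a matrix whose geometric sums are bounded: `sig ≤ 1`. -/
lemma sig_le_one_of_geom_fixed {X W : Matrix (Fin n) (Fin n) ℝ} (hX : ∀ i j, 0 ≤ X i j)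
    (hW0 : ∀ i j, 0 ≤ W i j) (hfix : 1 + X * W = W) : sig X ≤ 1 := by
  have hgeom := geom_bounded_of_fixed hX hW0 hfix
  set C : ℝ := ∑ i, ∑ j, W i j with hC
  refine sig_le_one_of_bounded C fun m i j => ?_
  have hQ0 : ∀ i j, 0 ≤ (∑ k ∈ Finset.range m, X ^ k) i j := by
    intro i j
    rw [Matrix.sum_apply]
    exact Finset.sum_nonneg fun k _ => pow_nn hX k i j
  have h1 : (X ^ m) i j ≤ W i j := by
    have e : (X ^ m) i j
        = (∑ k ∈ Finset.range (m + 1), X ^ k) i j - (∑ k ∈ Finset.range m, X ^ k) i j := by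
      rw [Finset.sum_range_succ, Matrix.add_apply]
      ring
    rw [e]
    have := hgeom (m + 1) i j
    linarith [hQ0 i j]
  have h2 : W i j ≤ C := by
    rw [hC]
    calc W i j ≤ ∑ k, W i k :=
          Finset.single_le_sum (f := fun k => W i k) (fun k _ => hW0 i k) (Finset.mem_univ j)
      _ ≤ ∑ l, ∑ k, W l k :=
          Finset.single_le_sum (f := fun l => ∑ k, W l k)
            (fun l _ => Finset.sum_nonneg fun k _ => hW0 l k) (Finset.mem_univ i)
  rw [abs_of_nonneg (pow_nn hX m i j)]
  exact h1.trans h2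

lemma one_nn : ∀ i j : Fin n, 0 ≤ (1 : Matrix (Fin n) (Fin n) ℝ) i j := by
  intro i j
  by_cases h : i = j <;> simp [Matrix.one_apply, h]

lemma add_nn {A B : Matrix (Fin n) (Fin n) ℝ} (hA : ∀ i j, 0 ≤ A i j) (hB : ∀ i j, 0 ≤ B i j) :
    ∀ i j, 0 ≤ (A + B) i j := fun i j => by
  rw [Matrix.add_apply]; exact add_nonneg (hA i j) (hB i j)

/-- Lemma A: if `sig (F * R_t) < 1` then `sig (T + F) ≤ t`. -/
lemma sig_add_le {T F Rt : Matrix (Fin n) (Fin n) ℝ} (hT : ∀ i j, 0 ≤ T i j)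
    (hF : ∀ i j, 0 ≤ F i j) {t : ℝ} (ht : 0 < t)
    (hRt0 : ∀ i j, 0 ≤ Rt i j) (hRt1 : (t • 1 - T) * Rt = 1) (hRt2 : Rt * (t • 1 - T) = 1)
    (hσFR : sig (F * Rt) < 1) : sig (T + F) ≤ ENNReal.ofReal t := by
  obtain ⟨V, hV0, hV1, hV2⟩ := neumann (mul_nn hF hRt0) hσFR
  set S := Rt * V with hSdef
  have hS0 : ∀ i j, 0 ≤ S i j := mul_nn hRt0 hV0
  have hfactor : t • (1 : Matrix (Fin n) (Fin n) ℝ) - (T + F)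
      = (1 - F * Rt) * (t • 1 - T) := by
    rw [Matrix.sub_mul, one_mul, mul_assoc, hRt2, mul_one, sub_sub]
  have hS1 : (t • (1 : Matrix (Fin n) (Fin n) ℝ) - (T + F)) * S = 1 := by
    rw [hfactor, hSdef, mul_assoc, ← mul_assoc (t • 1 - T), hRt1, one_mul, hV1]
  have key2 : 1 + (T + F) * S = t • S := by
    have h1 : t • S - (T + F) * S = 1 := by
      rw [← hS1, Matrix.sub_mul, Matrix.smul_mul, one_mul]
    rw [← h1]; abel
  set X := t⁻¹ • (T + F) with hXdef
  have hX0 : ∀ i j, 0 ≤ X i j := fun i j =>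
    mul_nonneg (inv_nonneg.mpr ht.le) (add_nn hT hF i j)
  have hW0 : ∀ i j, 0 ≤ (t • S) i j := fun i j =>
    mul_nonneg ht.le (hS0 i j)
  have hfix : 1 + X * (t • S) = t • S := by
    rw [hXdef, Matrix.smul_mul, Matrix.mul_smul, smul_smul, inv_mul_cancel₀ ht.ne', one_smul]
    exact key2
  have hsigX : sig X ≤ 1 := sig_le_one_of_geom_fixed hX0 hW0 hfix
  have hTF : T + F = t • X := by
    rw [hXdef, smul_smul, mul_inv_cancel₀ ht.ne', one_smul]
  calc sig (T + F) = sig (t • X) := by rw [hTF]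
    _ = (‖t‖₊ : ℝ≥0∞) * sig X := sig_smul t X
    _ ≤ (‖t‖₊ : ℝ≥0∞) * 1 := mul_le_mul_right hsigX _
    _ = ENNReal.ofReal t := by rw [mul_one, ← Real.enorm_eq_ofReal ht.le, enorm_eq_nnnorm]

/-- Lemma B: if `sig (T + F) < t` then `sig (F * R_t) ≤ 1`. -/
lemma sig_FR_le {T F Rt : Matrix (Fin n) (Fin n) ℝ} (hT : ∀ i j, 0 ≤ T i j)
    (hF : ∀ i j, 0 ≤ F i j) {t : ℝ} (ht : 0 < t)
    (hRt0 : ∀ i j, 0 ≤ Rt i j) (hRt2 : Rt * (t • 1 - T) = 1)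
    (hσTF : sig (T + F) < ENNReal.ofReal t) : sig (F * Rt) ≤ 1 := by
  obtain ⟨S, hS0, hS1, hS2⟩ := resolvent_ex (add_nn hT hF) ht hσTF
  have h1 : (t • (1 : Matrix (Fin n) (Fin n) ℝ) - T) * S = 1 + F * S := by
    have e : t • (1 : Matrix (Fin n) (Fin n) ℝ) - T = (t • 1 - (T + F)) + F := by abel
    rw [e, Matrix.add_mul, hS1]
  have keyB : Rt * (1 + F * S) = S := by
    rw [← h1, ← mul_assoc, hRt2, one_mul]
  have hW0 : ∀ i j, 0 ≤ (1 + F * S) i j := add_nn one_nn (mul_nn hF hS0)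
  have hfix : 1 + (F * Rt) * (1 + F * S) = 1 + F * S := by
    rw [mul_assoc, keyB]
  exact sig_le_one_of_geom_fixed (mul_nn hF hRt0) hW0 hfix

lemma sig_mul_res_le {F R R' : Matrix (Fin n) (Fin n) ℝ} (hF : ∀ i j, 0 ≤ F i j)
    (hR0 : ∀ i j, 0 ≤ R i j) {d : ℝ} (hd : 0 ≤ d)
    (hle : ∀ i j, R i j ≤ d * R' i j) :
    sig (F * R) ≤ ENNReal.ofReal d * sig (F * R') := by
  have h1 : ∀ i j, (F * R) i j ≤ (d • (F * R')) i j := by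
    intro i j
    have h2 := mul_mono (A' := F) (B' := d • R') hF (fun i j => le_refl (F i j)) hR0
      (fun i j => by simpa [Matrix.smul_apply, smul_eq_mul] using hle i j) i j
    rwa [Matrix.mul_smul] at h2
  calc sig (F * R) ≤ sig (d • (F * R')) := sig_mono (mul_nn hF hR0) h1
    _ = ENNReal.ofReal d * sig (F * R') := by
        rw [sig_smul, ← Real.enorm_eq_ofReal hd, enorm_eq_nnnorm]

noncomputable def specRad {n : ℕ} (A : Matrix (Fin n) (Fin n) ℝ) : ℝ :=
  (spectralRadius ℂ (A.map Complex.ofReal)).toReal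

def MatIrred {n : ℕ} (A : Matrix (Fin n) (Fin n) ℝ) : Prop :=
  ∀ i j, ∃ k : ℕ, 0 < k ∧ 0 < (A ^ k) i j

def MatPrimitive {n : ℕ} (A : Matrix (Fin n) (Fin n) ℝ) : Prop :=
  ∃ k : ℕ, 0 < k ∧ ∀ i j, 0 < (A ^ k) i j

lemma specRad_eq (A : Matrix (Fin n) (Fin n) ℝ) : specRad A = (sig A).toReal := rfl

theorem scaling_achieves_growth_rate {n : ℕ} (T F : Matrix (Fin n) (Fin n) ℝ)
    (hT : ∀ i j, 0 ≤ T i j) (hF : ∀ i j, 0 ≤ F i j)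
    (hρ : specRad T < 1) (hF0 : F ≠ 0) (hirr : MatIrred (T + F))
    (s : ℝ) (hs : specRad T < s)
    (q : ℝ) (hq : q = specRad (F * (1 - s⁻¹ • T)⁻¹) / s) :
    0 < q ∧ specRad (T + q⁻¹ • F) = s := by
  have hs0 : 0 < s := lt_of_le_of_lt ENNReal.toReal_nonneg hs
  have hσT : sig T < ENNReal.ofReal s := by
    rw [show sig T = ENNReal.ofReal (specRad T) from (ENNReal.ofReal_toReal (sig_ne_top T)).symm]
    exact (ENNReal.ofReal_lt_ofReal_iff hs0).mpr hs
  obtain ⟨Rs, hRs0, hRs1, hRs2⟩ := resolvent_ex hT hs0 hσT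
  -- identify the matrix inverse
  have hfact : (1 : Matrix (Fin n) (Fin n) ℝ) - s⁻¹ • T = s⁻¹ • (s • 1 - T) := by
    rw [smul_sub, smul_smul, inv_mul_cancel₀ hs0.ne', one_smul]
  have hinv : (1 - s⁻¹ • T)⁻¹ = s • Rs := by
    apply Matrix.inv_eq_right_inv
    rw [hfact, Matrix.smul_mul, Matrix.mul_smul, smul_smul, inv_mul_cancel₀ hs0.ne', one_smul,
      hRs1]
  set B := F * Rs with hBdef
  have hB0 : ∀ i j, 0 ≤ B i j := mul_nn hF hRs0
  -- q = toReal (sig B)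
  have hq' : q = (sig B).toReal := by
    rw [hq, hinv, Matrix.mul_smul, specRad_eq, sig_smul, ENNReal.toReal_mul, ENNReal.coe_toReal,
      coe_nnnorm, Real.norm_eq_abs, abs_of_pos hs0, mul_comm, mul_div_assoc,
      div_self hs0.ne', mul_one]
  -- a positive entry of F
  obtain ⟨a, b, hFab⟩ : ∃ a b, 0 < F a b := by
    by_contra h
    push_neg at h
    exact hF0 (by ext i j; exact le_antisymm (h i j) (hF i j))
  obtain ⟨k, hk0, hkpos⟩ := hirr b a
  -- positivity of sig B
  have hBpos : sig B ≠ 0 := by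
    intro hB0'
    -- choose a large multiple c
    set D : ℝ := ((T + F) ^ k) b a * F a b with hD
    have hDpos : 0 < D := mul_pos hkpos hFab
    set c : ℝ := max 1 ((2 * s) ^ (k + 1) / D) with hc
    have hc1 : (1 : ℝ) ≤ c := le_max_left _ _
    have hcpos : 0 < c := lt_of_lt_of_le one_pos hc1
    have hcD : (2 * s) ^ (k + 1) ≤ c * D := by
      rw [hc]
      calc (2 * s) ^ (k + 1) = ((2 * s) ^ (k + 1) / D) * D := by
            field_simp
        _ ≤ max 1 ((2 * s) ^ (k + 1) / D) * D :=
            mul_le_mul_of_nonneg_right (le_max_right _ _) hDpos.le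
    have hTcF0 : ∀ i j, 0 ≤ (T + c • F) i j :=
      add_nn hT (fun i j => mul_nonneg hcpos.le (hF i j))
    have hmono : ∀ i j, (T + F) i j ≤ (T + c • F) i j := by
      intro i j
      simp only [Matrix.add_apply, Matrix.smul_apply, smul_eq_mul]
      nlinarith [hF i j]
    -- lower bound : sig (T + c•F) ≥ 2s
    have hlow : ENNReal.ofReal (2 * s) ≤ sig (T + c • F) := by
      refine sig_diag_lower hTcF0 b (K := k + 1) (Nat.succ_pos k) (by positivity) ?_
      have h1 : ((T + F) ^ k) b a ≤ ((T + c • F) ^ k) b a :=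
        pow_mono (add_nn hT hF) hmono k b a
      have h2 : c * F a b ≤ (T + c • F) a b := by
        simp only [Matrix.add_apply, Matrix.smul_apply, smul_eq_mul]
        linarith [hT a b]
      calc (2 * s) ^ (k + 1) ≤ c * D := hcD
        _ = ((T + F) ^ k) b a * (c * F a b) := by rw [hD]; ring
        _ ≤ ((T + c • F) ^ k) b a * (T + c • F) a b := by
            refine mul_le_mul h1 h2 (by positivity) (pow_nn hTcF0 k b a)
        _ ≤ ((T + c • F) ^ (k + 1)) b b := by
            rw [pow_succ]
            exact entry_mul_ge (pow_nn hTcF0 k) hTcF0 b a b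
    -- upper bound via Lemma A at t = 3s/2
    set t : ℝ := 3 / 2 * s with htdef
    have hts : s ≤ t := by rw [htdef]; nlinarith
    have ht0 : 0 < t := by rw [htdef]; linarith
    have hσTt : sig T < ENNReal.ofReal t := hσT.trans_le (ENNReal.ofReal_le_ofReal hts)
    obtain ⟨Rt, hRt0, hRt1, hRt2⟩ := resolvent_ex hT ht0 hσTt
    have hcmp := resolvent_cmp hT hts hRs0 hRs2 hRt0 hRt1
    have hRtle : ∀ i j, Rt i j ≤ (t⁻¹ * s) • Rs i j := by
      intro i j
      have h5 := hcmp i j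
      simp only [Matrix.smul_apply, smul_eq_mul] at h5 ⊢
      rw [mul_assoc]
      have h6 : Rt i j = t⁻¹ * (t * Rt i j) := by field_simp
      rw [h6]
      exact mul_le_mul_of_nonneg_left h5 (inv_nonneg.mpr ht0.le)
    have hts0 : 0 ≤ t⁻¹ * s := mul_nonneg (inv_nonneg.mpr ht0.le) hs0.le
    have hFRt : sig (F * Rt) = 0 := by
      have h7 := sig_mul_res_le hF hRt0 hts0 (fun i j => by
        simpa [smul_eq_mul, mul_assoc] using hRtle i j)
      rw [← hBdef, hB0', mul_zero] at h7
      exact le_antisymm h7 zero_le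
    have hσcFRt : sig ((c • F) * Rt) < 1 := by
      rw [Matrix.smul_mul, sig_smul, hFRt, mul_zero]
      exact zero_lt_one
    have hup := sig_add_le hT (fun i j => mul_nonneg hcpos.le (hF i j)) ht0 hRt0 hRt1 hRt2 hσcFRt
    have : ENNReal.ofReal (2 * s) ≤ ENNReal.ofReal t := hlow.trans hup
    rw [ENNReal.ofReal_le_ofReal_iff ht0.le, htdef] at this
    linarith
  have hqpos : 0 < q := by
    rw [hq']
    exact ENNReal.toReal_pos hBpos (sig_ne_top _)
  refine ⟨hqpos, ?_⟩
  have hsigB : sig B = ENNReal.ofReal q := by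
    rw [hq', ENNReal.ofReal_toReal (sig_ne_top _)]
  have hqF0 : ∀ i j, 0 ≤ (q⁻¹ • F) i j := fun i j =>
    mul_nonneg (inv_nonneg.mpr hqpos.le) (hF i j)
  have hM0 : ∀ i j, 0 ≤ (T + q⁻¹ • F) i j := add_nn hT hqF0
  -- upper estimate
  have hupper : (sig (T + q⁻¹ • F)).toReal ≤ s := by
    by_contra hgt
    push_neg at hgt
    set x := (sig (T + q⁻¹ • F)).toReal with hx
    set t : ℝ := (s + x) / 2 with htdef
    have hst : s < t := by rw [htdef]; linarith
    have htx : t < x := by rw [htdef]; linarith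
    have ht0 : 0 < t := lt_trans hs0 hst
    have hσTt : sig T < ENNReal.ofReal t := hσT.trans_le (ENNReal.ofReal_le_ofReal hst.le)
    obtain ⟨Rt, hRt0, hRt1, hRt2⟩ := resolvent_ex hT ht0 hσTt
    have hcmp := resolvent_cmp hT hst.le hRs0 hRs2 hRt0 hRt1
    have hRtle : ∀ i j, Rt i j ≤ (t⁻¹ * s) * Rs i j := by
      intro i j
      have h5 := hcmp i j
      simp only [Matrix.smul_apply, smul_eq_mul] at h5
      rw [mul_assoc]
      have h6 : Rt i j = t⁻¹ * (t * Rt i j) := by field_simp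
      rw [h6]
      exact mul_le_mul_of_nonneg_left h5 (inv_nonneg.mpr ht0.le)
    have hts0 : 0 ≤ t⁻¹ * s := mul_nonneg (inv_nonneg.mpr ht0.le) hs0.le
    have hkey : sig ((q⁻¹ • F) * Rt) < 1 := by
      have h7 := sig_mul_res_le hqF0 hRt0 hts0 hRtle
      have h8 : sig ((q⁻¹ • F) * Rs) = ENNReal.ofReal q⁻¹ * ENNReal.ofReal q := by
        rw [Matrix.smul_mul, sig_smul, ← hBdef, hsigB,
          ← Real.enorm_eq_ofReal (inv_nonneg.mpr hqpos.le), enorm_eq_nnnorm]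
      have h9 : ENNReal.ofReal q⁻¹ * ENNReal.ofReal q = 1 := by
        rw [← ENNReal.ofReal_mul (inv_nonneg.mpr hqpos.le), inv_mul_cancel₀ hqpos.ne',
          ENNReal.ofReal_one]
      calc sig ((q⁻¹ • F) * Rt) ≤ ENNReal.ofReal (t⁻¹ * s) * sig ((q⁻¹ • F) * Rs) := h7
        _ = ENNReal.ofReal (t⁻¹ * s) := by rw [h8, h9, mul_one]
        _ < 1 := by
            rw [ENNReal.ofReal_lt_one]
            rw [inv_mul_eq_div, div_lt_one ht0]
            exact hst
    have hup := sig_add_le hT hqF0 ht0 hRt0 hRt1 hRt2 hkey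
    have h10 : x ≤ t := by
      rw [hx]
      exact ENNReal.toReal_le_of_le_ofReal ht0.le hup
    linarith
  -- lower estimate
  have hlower : ¬ (sig (T + q⁻¹ • F)).toReal < s := by
    intro hlt
    set x := (sig (T + q⁻¹ • F)).toReal with hx
    have hx0 : 0 ≤ x := ENNReal.toReal_nonneg
    set t : ℝ := (x + s) / 2 with htdef
    have hxt : x < t := by rw [htdef]; linarith
    have hts : t < s := by rw [htdef]; linarith
    have ht0 : 0 < t := lt_of_le_of_lt hx0 hxt
    have hσM : sig (T + q⁻¹ • F) < ENNReal.ofReal t := by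
      rw [show sig (T + q⁻¹ • F) = ENNReal.ofReal x from
        (ENNReal.ofReal_toReal (sig_ne_top _)).symm]
      exact (ENNReal.ofReal_lt_ofReal_iff ht0).mpr hxt
    have hσTt : sig T < ENNReal.ofReal t :=
      lt_of_le_of_lt (sig_mono hT (fun i j => by
        rw [Matrix.add_apply]; linarith [hqF0 i j])) hσM
    obtain ⟨Rt, hRt0, hRt1, hRt2⟩ := resolvent_ex hT ht0 hσTt
    have hFRle := sig_FR_le hT hqF0 ht0 hRt0 hRt2 hσM
    -- comparison with roles swapped : s • Rs ≤ t • Rt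
    have hcmp := resolvent_cmp hT hts.le hRt0 hRt2 hRs0 hRs1
    have hRsle : ∀ i j, Rs i j ≤ (s⁻¹ * t) * Rt i j := by
      intro i j
      have h5 := hcmp i j
      simp only [Matrix.smul_apply, smul_eq_mul] at h5
      rw [mul_assoc]
      have h6 : Rs i j = s⁻¹ * (s * Rs i j) := by field_simp
      rw [h6]
      exact mul_le_mul_of_nonneg_left h5 (inv_nonneg.mpr hs0.le)
    have hst0 : 0 ≤ s⁻¹ * t := mul_nonneg (inv_nonneg.mpr hs0.le) ht0.le
    have h7 := sig_mul_res_le hqF0 hRs0 hst0 hRsle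
    have h8 : sig ((q⁻¹ • F) * Rs) = 1 := by
      rw [Matrix.smul_mul, sig_smul, ← hBdef, hsigB,
        ← enorm_eq_nnnorm, Real.enorm_eq_ofReal (inv_nonneg.mpr hqpos.le),
        ← ENNReal.ofReal_mul (inv_nonneg.mpr hqpos.le), inv_mul_cancel₀ hqpos.ne',
        ENNReal.ofReal_one]
    have h9 : (1 : ℝ≥0∞) < 1 := by
      calc (1 : ℝ≥0∞) = sig ((q⁻¹ • F) * Rs) := h8.symm
        _ ≤ ENNReal.ofReal (s⁻¹ * t) * sig ((q⁻¹ • F) * Rt) := h7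
        _ ≤ ENNReal.ofReal (s⁻¹ * t) * 1 := mul_le_mul_right hFRle _
        _ < 1 := by
            rw [mul_one, ENNReal.ofReal_lt_one, inv_mul_eq_div, div_lt_one hs0]
            exact hts
    exact absurd h9 (lt_irrefl _)
  rw [specRad_eq]
  linarith [lt_or_ge ((sig (T + q⁻¹ • F)).toReal) s]
end

section
/- Let T and F be nonnegative n×n matrices with ρ(T) < 1, F ≠ 0, and T + F irreducible. Then the function s ↦ q(s) = ρ(F(I−T/s)^{-1})/s is strictly decreasing on (ρ(T), ∞), and q(s) → 0 as s → ∞. -/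
open Matrix Filter Topology
open scoped ENNReal NNReal

namespace QAux

attribute [local instance] Matrix.linftyOpNormedRing Matrix.linftyOpNormedAlgebra
variable {n : ℕ}

noncomputable def rhoE (A : Matrix (Fin n) (Fin n) ℝ) : ℝ≥0∞ :=
  spectralRadius ℂ (A.map Complex.ofReal)

lemma map_ofReal_pow (A : Matrix (Fin n) (Fin n) ℝ) (k : ℕ) :
    (A.map Complex.ofReal) ^ k = (A ^ k).map Complex.ofReal := by
  have : ∀ B : Matrix (Fin n) (Fin n) ℝ, B.map Complex.ofReal = Complex.ofRealHom.mapMatrix B :=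
    fun B => rfl
  rw [this, this, map_pow]

lemma nnnorm_map_ofReal (A : Matrix (Fin n) (Fin n) ℝ) :
    ‖A.map Complex.ofReal‖₊ = ‖A‖₊ := by
  rw [Matrix.linfty_opNNNorm_def, Matrix.linfty_opNNNorm_def]
  congr 1
  ext i
  congr 1
  ext j
  simp [Matrix.map_apply]

lemma real_nnnorm_mono {x y : ℝ} (hx : 0 ≤ x) (hxy : x ≤ y) : ‖x‖₊ ≤ ‖y‖₊ := by
  rw [← NNReal.coe_le_coe]
  simpa [Real.norm_eq_abs, abs_of_nonneg hx, abs_of_nonneg (hx.trans hxy)] using hxy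

lemma nnnorm_le_of_ent {A B : Matrix (Fin n) (Fin n) ℝ}
    (h : ∀ i j, ‖B i j‖₊ ≤ ‖A i j‖₊) : ‖B‖₊ ≤ ‖A‖₊ := by
  rw [Matrix.linfty_opNNNorm_def, Matrix.linfty_opNNNorm_def]
  exact Finset.sup_mono_fun fun i _ => Finset.sum_le_sum fun j _ => h i j

lemma ent_nnnorm_le (A : Matrix (Fin n) (Fin n) ℝ) (i j : Fin n) : ‖A i j‖₊ ≤ ‖A‖₊ := by
  rw [Matrix.linfty_opNNNorm_def]
  refine le_trans (Finset.single_le_sum (f := fun j => ‖A i j‖₊) (fun _ _ => zero_le)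
    (Finset.mem_univ j)) ?_
  exact Finset.le_sup (f := fun i => ∑ j, ‖A i j‖₊) (Finset.mem_univ i)

lemma gelfandR (A : Matrix (Fin n) (Fin n) ℝ) :
    Tendsto (fun k : ℕ => (‖A ^ k‖₊ : ℝ≥0∞) ^ (1 / (k : ℝ))) atTop (𝓝 (rhoE A)) := by
  have h := spectrum.pow_nnnorm_pow_one_div_tendsto_nhds_spectralRadius (A.map Complex.ofReal)
  refine h.congr fun k => ?_
  rw [map_ofReal_pow, nnnorm_map_ofReal]


def Nn (A : Matrix (Fin n) (Fin n) ℝ) : Prop := ∀ i j, 0 ≤ A i j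
def Ent (A B : Matrix (Fin n) (Fin n) ℝ) : Prop := ∀ i j, A i j ≤ B i j

lemma Nn.mul {A B : Matrix (Fin n) (Fin n) ℝ} (hA : Nn A) (hB : Nn B) : Nn (A * B) := by
  intro i j
  rw [Matrix.mul_apply]
  exact Finset.sum_nonneg fun k _ => mul_nonneg (hA _ _) (hB _ _)

lemma Nn.pow {A : Matrix (Fin n) (Fin n) ℝ} (hA : Nn A) (k : ℕ) : Nn (A ^ k) := by
  induction k with
  | zero =>
      intro i j
      rcases eq_or_ne i j with rfl | h
      · simp [pow_zero, Matrix.one_apply]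
      · simp [pow_zero, Matrix.one_apply, h]
  | succ k ih => rw [pow_succ]; exact ih.mul hA

lemma mul_ent_mono {A A' B B' : Matrix (Fin n) (Fin n) ℝ} (hA : Nn A) (hB : Nn B)
    (h1 : Ent A A') (h2 : Ent B B') : Ent (A * B) (A' * B') := by
  intro i j
  rw [Matrix.mul_apply, Matrix.mul_apply]
  exact Finset.sum_le_sum fun k _ =>
    mul_le_mul (h1 _ _) (h2 _ _) (hB _ _) (le_trans (hA _ _) (h1 _ _))

lemma pow_ent_mono {A A' : Matrix (Fin n) (Fin n) ℝ} (hA : Nn A) (h : Ent A A') (k : ℕ) :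
    Ent (A ^ k) (A' ^ k) := by
  induction k with
  | zero => intro i j; simp [pow_zero]
  | succ k ih => rw [pow_succ, pow_succ]; exact mul_ent_mono (hA.pow k) hA ih h

lemma mul_apply_ge {A B : Matrix (Fin n) (Fin n) ℝ} (hA : Nn A) (hB : Nn B) (i p j : Fin n) :
    A i p * B p j ≤ (A * B) i j := by
  rw [Matrix.mul_apply]
  exact Finset.single_le_sum (f := fun p => A i p * B p j)
    (fun k _ => mul_nonneg (hA _ _) (hB _ _)) (Finset.mem_univ p)


lemma rhoE_mono {A B : Matrix (Fin n) (Fin n) ℝ} (hB : Nn B) (hBA : Ent B A) :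
    rhoE B ≤ rhoE A := by
  refine le_of_tendsto_of_tendsto' (gelfandR B) (gelfandR A) fun k => ?_
  refine ENNReal.rpow_le_rpow ?_ (by positivity)
  refine ENNReal.coe_le_coe.2 (nnnorm_le_of_ent fun i j => ?_)
  exact real_nnnorm_mono ((hB.pow k) i j) (pow_ent_mono hB hBA k i j)

lemma rhoE_ne_top [Nonempty (Fin n)] (A : Matrix (Fin n) (Fin n) ℝ) : rhoE A ≠ ⊤ :=
  ((spectrum.spectralRadius_le_nnnorm (𝕜 := ℂ) (A.map Complex.ofReal)).trans_lt
    ENNReal.coe_lt_top).ne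

lemma rhoE_pos {A : Matrix (Fin n) (Fin n) ℝ} (hA : Nn A) {a : Fin n} {r : ℕ} {δ : ℝ}
    (hr : 1 ≤ r) (hδ : 0 < δ) (h : δ ≤ (A ^ r) a a) : 0 < rhoE A := by
  set δ' : ℝ≥0 := ⟨δ, hδ.le⟩ with hδ'
  -- diagonal powers
  have hdiag : ∀ k : ℕ, δ ^ k ≤ (A ^ (r * k)) a a := by
    intro k
    induction k with
    | zero => simp [pow_zero, Matrix.one_apply]
    | succ k ih =>
        have : A ^ (r * (k + 1)) = A ^ (r * k) * A ^ r := by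
          rw [← pow_add]; ring_nf
        rw [this, pow_succ]
        calc δ ^ k * δ ≤ (A ^ (r * k)) a a * (A ^ r) a a :=
              mul_le_mul ih h hδ.le ((hA.pow _) a a)
          _ ≤ (A ^ (r * k) * A ^ r) a a := mul_apply_ge (hA.pow _) (hA.pow _) a a a
  have hnorm : ∀ k : ℕ, (δ' : ℝ≥0∞) ^ k ≤ (‖A ^ (r * k)‖₊ : ℝ≥0∞) := by
    intro k
    have h1 : δ ^ k ≤ (A ^ (r * k)) a a := hdiag k
    have h2 : ‖(δ : ℝ) ^ k‖₊ ≤ ‖(A ^ (r * k)) a a‖₊ :=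
      real_nnnorm_mono (by positivity) h1
    have h3 : ‖(δ : ℝ) ^ k‖₊ = δ' ^ k := by
      ext; simp [Real.norm_eq_abs, abs_of_nonneg (by positivity : (0:ℝ) ≤ δ ^ k), hδ', abs_of_nonneg hδ.le]
      exact (NNReal.coe_pow (⟨δ, hδ.le⟩ : ℝ≥0) k).symm
    calc ((δ' : ℝ≥0∞)) ^ k = ((δ' ^ k : ℝ≥0) : ℝ≥0∞) := by rw [ENNReal.coe_pow]
      _ ≤ (‖(A ^ (r * k)) a a‖₊ : ℝ≥0∞) := by rw [← h3]; exact_mod_cast h2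
      _ ≤ (‖A ^ (r * k)‖₊ : ℝ≥0∞) := ENNReal.coe_le_coe.2 (ent_nnnorm_le _ a a)
  -- limit along subsequence
  have hsub : Tendsto (fun k : ℕ => (‖A ^ (r * k)‖₊ : ℝ≥0∞) ^ (1 / ((r * k : ℕ) : ℝ)))
      atTop (𝓝 (rhoE A)) := by
    exact (gelfandR A).comp
      (tendsto_atTop_mono (fun k => Nat.le_mul_of_pos_left k (by omega)) tendsto_id)
  have hlow : (δ' : ℝ≥0∞) ^ ((1 : ℝ) / r) ≤ rhoE A := by
    refine ge_of_tendsto hsub ?_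
    filter_upwards [eventually_ge_atTop 1] with k hk
    have hrk : ((r * k : ℕ) : ℝ) ≠ 0 := by positivity
    have : (δ' : ℝ≥0∞) ^ ((1:ℝ)/r) = ((δ' : ℝ≥0∞) ^ k) ^ (1 / ((r * k : ℕ) : ℝ)) := by
      rw [← ENNReal.rpow_natCast ((δ' : ℝ≥0∞)) k, ← ENNReal.rpow_mul]
      congr 1
      field_simp
      exact Nat.cast_mul r k
    rw [this]
    exact ENNReal.rpow_le_rpow (hnorm k) (by positivity)
  refine lt_of_lt_of_le ?_ hlow
  refine ENNReal.rpow_pos ?_ ENNReal.coe_ne_top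
  exact_mod_cast (show (0:ℝ≥0) < δ' from hδ)


noncomputable def specRad' (A : Matrix (Fin n) (Fin n) ℝ) : ℝ := (rhoE A).toReal

lemma exists_pow_norm_lt [Nonempty (Fin n)] {T : Matrix (Fin n) (Fin n) ℝ} {s : ℝ}
    (hs0 : 0 < s) (hs : specRad' T < s) :
    ∃ m : ℕ, 1 ≤ m ∧ ‖(s⁻¹ • T) ^ m‖ < 1 := by
  have hfin := rhoE_ne_top T
  have hlt : rhoE T < ENNReal.ofReal s := by
    rw [ENNReal.lt_ofReal_iff_toReal_lt hfin]; exact hs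
  have hev : ∀ᶠ k : ℕ in atTop, (‖T ^ k‖₊ : ℝ≥0∞) ^ (1 / (k : ℝ)) < ENNReal.ofReal s :=
    (gelfandR T).eventually_lt_const hlt
  obtain ⟨m, hm1, hm⟩ := ((eventually_ge_atTop 1).and hev).exists
  refine ⟨m, hm1, ?_⟩
  have hm0 : (m : ℝ) ≠ 0 := by positivity
  have hpow : (‖T ^ m‖₊ : ℝ≥0∞) < (ENNReal.ofReal s) ^ m := by
    have := ENNReal.rpow_lt_rpow hm (by positivity : (0:ℝ) < (m:ℝ))
    rwa [← ENNReal.rpow_mul, one_div, inv_mul_cancel₀ hm0, ENNReal.rpow_one,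
      ENNReal.rpow_natCast] at this
  have hreal : ‖T ^ m‖ < s ^ m := by
    rw [← ENNReal.ofReal_pow hs0.le] at hpow
    rw [← ENNReal.ofReal_lt_ofReal_iff_of_nonneg (norm_nonneg _)] at *
    · rwa [ofReal_norm]
  have hx : (s⁻¹ • T) ^ m = (s⁻¹) ^ m • T ^ m := smul_pow _ _ _
  rw [hx, norm_smul, Real.norm_eq_abs, abs_of_nonneg (by positivity)]
  calc (s⁻¹) ^ m * ‖T ^ m‖ < (s⁻¹) ^ m * s ^ m :=
        mul_lt_mul_of_pos_left hreal (by positivity)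
    _ = 1 := by rw [← mul_pow, inv_mul_cancel₀ hs0.ne', one_pow]


section Bfacts
variable {T : Matrix (Fin n) (Fin n) ℝ} {s : ℝ} {m : ℕ}

lemma B_facts (hT : Nn T) (hs0 : 0 < s) (hm1 : 1 ≤ m) (hm : ‖(s⁻¹ • T) ^ m‖ < 1) :
    (1 - s⁻¹ • T) * (1 - s⁻¹ • T)⁻¹ = 1 ∧ (1 - s⁻¹ • T)⁻¹ * (1 - s⁻¹ • T) = 1 ∧
    (∀ p : ℕ, Ent ((s⁻¹ • T) ^ p) (1 - s⁻¹ • T)⁻¹) := by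
  set x : Matrix (Fin n) (Fin n) ℝ := s⁻¹ • T with hxdef
  have hx : Nn x := fun i j => by
    rw [hxdef, Matrix.smul_apply, smul_eq_mul]
    exact mul_nonneg (by positivity) (hT i j)
  set S : Matrix (Fin n) (Fin n) ℝ := ∑' k : ℕ, (x ^ m) ^ k with hSdef
  have hsummable : Summable fun k : ℕ => (x ^ m) ^ k :=
    summable_geometric_of_norm_lt_one hm
  have hSsum : HasSum (fun k : ℕ => (x ^ m) ^ k) S := hsummable.hasSum
  -- entrywise facts about S
  have hSent : ∀ q : ℕ, Ent ((x ^ m) ^ q) S := by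
    intro q i j
    have happ : HasSum (fun k : ℕ => ((x ^ m) ^ k) i j) (S i j) := by
      have h1 := hSsum.map (Pi.evalAddMonoidHom (fun _ : Fin n => Fin n → ℝ) i)
        (by exact continuous_apply i)
      exact h1.map (Pi.evalAddMonoidHom (fun _ : Fin n => ℝ) j) (by exact continuous_apply j)
    exact le_hasSum happ q fun k _ => ((hx.pow m).pow k) i j
  have hS0 : Nn S := fun i j => le_trans (((hx.pow m).pow 0) i j) (hSent 0 i j)
  -- the candidate inverse
  set y : Matrix (Fin n) (Fin n) ℝ := (∑ k ∈ Finset.range m, x ^ k) * S with hydef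
  have h1 : (1 - x) * y = 1 := by
    have hgs : (1 - x) * (∑ k ∈ Finset.range m, x ^ k) = 1 - x ^ m := mul_neg_geom_sum x m
    have hus : (1 - x ^ m) * S = 1 := mul_neg_geom_series (x ^ m) hm
    rw [hydef, ← Matrix.mul_assoc, hgs, hus]
  have hinv : (1 - x)⁻¹ = y := Matrix.inv_eq_right_inv h1
  refine ⟨by rw [hinv]; exact h1, by rw [hinv]; exact mul_eq_one_comm.mp h1, ?_⟩
  intro p i j
  rw [hinv]
  have hp : p = p % m + m * (p / m) := by
    rw [Nat.mod_add_div]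
  have hxp : x ^ p = x ^ (p % m) * (x ^ m) ^ (p / m) := by
    rw [← pow_mul, ← pow_add, ← hp]
  have hstep1 : (x ^ p) i j ≤ (x ^ (p % m) * S) i j := by
    rw [hxp]
    exact mul_ent_mono (hx.pow _) ((hx.pow m).pow _) (fun _ _ => le_rfl) (hSent (p / m)) i j
  refine hstep1.trans ?_
  -- y i j = sum over k of (x^k * S) i j, bounded below by the (p % m) term
  have hy : y = ∑ k ∈ Finset.range m, x ^ k * S := by
    rw [hydef, Finset.sum_mul]
  rw [hy]
  have : (∑ k ∈ Finset.range m, x ^ k * S) i j = ∑ k ∈ Finset.range m, (x ^ k * S) i j := by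
    simp [Matrix.sum_apply]
  rw [this]
  exact Finset.single_le_sum (f := fun k => (x ^ k * S) i j)
    (fun k _ => ((hx.pow k).mul hS0) i j) (Finset.mem_range.mpr (Nat.mod_lt p (by omega)))

end Bfacts

section Graph
variable {A T F : Matrix (Fin n) (Fin n) ℝ}

lemma sum_pos_exists {f : Fin n → ℝ} (h0 : ∀ i, 0 ≤ f i) (h : 0 < ∑ i, f i) :
    ∃ i, 0 < f i := by
  by_contra hc
  push_neg at hc
  exact absurd (Finset.sum_nonpos fun i _ => hc i) (not_le.mpr h)

lemma pos_entry_path (hA : Nn A) :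
    ∀ (k : ℕ) (i j : Fin n), 0 < (A ^ k) i j →
      Relation.ReflTransGen (fun a b => 0 < A a b) i j := by
  intro k
  induction k with
  | zero =>
      intro i j h
      rcases eq_or_ne i j with rfl | hne
      · exact Relation.ReflTransGen.refl
      · rw [pow_zero, Matrix.one_apply_ne hne] at h; exact absurd h (lt_irrefl 0)
  | succ k ih =>
      intro i j h
      rw [pow_succ'] at h
      rw [Matrix.mul_apply] at h
      obtain ⟨p, hp⟩ := sum_pos_exists
        (fun p => mul_nonneg (hA i p) ((hA.pow k) p j)) h
      have h1 : 0 < A i p := by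
        rcases mul_pos_iff.mp hp with ⟨h1, _⟩ | ⟨h1, h2⟩
        · exact h1
        · exact absurd h2 (not_lt.mpr ((hA.pow k) p j))
      have h2 : 0 < (A ^ k) p j := by
        rcases mul_pos_iff.mp hp with ⟨_, h2⟩ | ⟨h1, _⟩
        · exact h2
        · exact absurd h1 (not_lt.mpr (hA i p))
      exact Relation.ReflTransGen.head h1 (ih p j h2)

/-- `relM i j`: there is an `F`-edge from `i` followed by a `T`-path to `j`. -/
def relM (T F : Matrix (Fin n) (Fin n) ℝ) (i j : Fin n) : Prop :=
  ∃ (p : Fin n) (k : ℕ), 0 < F i p ∧ 0 < (T ^ k) p j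

lemma key_trans (hT : Nn T) (hF : Nn F) {b a : Fin n}
    (hpath : Relation.ReflTransGen (fun u v => 0 < (T + F) u v) b a) :
    ∀ p : Fin n, relM T F p b → Relation.TransGen (relM T F) p a := by
  induction hpath using Relation.ReflTransGen.head_induction_on with
  | refl => exact fun p hp => Relation.TransGen.single hp
  | head h htail ih =>
      rename_i b' c
      intro p hp
      have hbc : 0 < T b' c ∨ 0 < F b' c := by
        by_contra hc
        push_neg at hc
        have : (T + F) b' c ≤ 0 := by
          have := add_nonpos hc.1 hc.2
          simpa [Matrix.add_apply] using this
        exact absurd h (not_lt.mpr this)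
      obtain ⟨p', k, hFp, hTk⟩ := hp
      rcases hbc with hTbc | hFbc
      · refine ih p ⟨p', k + 1, hFp, ?_⟩
        have : (T ^ k) p' b' * T b' c ≤ (T ^ (k + 1)) p' c := by
          rw [pow_succ]
          exact mul_apply_ge (hT.pow k) hT p' b' c
        exact lt_of_lt_of_le (mul_pos hTk hTbc) this
      · refine Relation.TransGen.head ⟨p', k, hFp, hTk⟩ (ih b' ⟨c, 0, hFbc, ?_⟩)
        simp [Matrix.one_apply]

lemma transgen_pow {M : Matrix (Fin n) (Fin n) ℝ} (hM : Nn M) {i j : Fin n}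
    (h : Relation.TransGen (fun u v => 0 < M u v) i j) :
    ∃ r : ℕ, 1 ≤ r ∧ 0 < (M ^ r) i j := by
  induction h with
  | single h => exact ⟨1, le_refl 1, by simpa [pow_one] using h⟩
  | tail hij hjk ih =>
      obtain ⟨r, hr1, hr⟩ := ih
      refine ⟨r + 1, by omega, ?_⟩
      rename_i c d
      have hle : (M ^ r) i c * M c d ≤ (M ^ (r + 1)) i d := by
        rw [pow_succ]
        exact mul_apply_ge (hM.pow r) hM _ _ _
      exact lt_of_lt_of_le (mul_pos hr hjk) hle

end Graph

section Main
variable {T F : Matrix (Fin n) (Fin n) ℝ}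

lemma specRad'_nonneg (A : Matrix (Fin n) (Fin n) ℝ) : 0 ≤ specRad' A :=
  ENNReal.toReal_nonneg

lemma s_facts [Nonempty (Fin n)] (hT : Nn T) {s : ℝ} (hs : specRad' T < s) :
    0 < s ∧ (1 - s⁻¹ • T) * (1 - s⁻¹ • T)⁻¹ = 1 ∧ (1 - s⁻¹ • T)⁻¹ * (1 - s⁻¹ • T) = 1 ∧
      ∀ p : ℕ, Ent ((s⁻¹ • T) ^ p) (1 - s⁻¹ • T)⁻¹ := by
  have hs0 : 0 < s := lt_of_le_of_lt (specRad'_nonneg T) hs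
  obtain ⟨m, hm1, hm⟩ := exists_pow_norm_lt hs0 hs
  exact ⟨hs0, B_facts hT hs0 hm1 hm⟩

lemma Nn_B [Nonempty (Fin n)] (hT : Nn T) {s : ℝ} (hs : specRad' T < s) :
    Nn (1 - s⁻¹ • T)⁻¹ := by
  obtain ⟨hs0, -, -, hEnt⟩ := s_facts hT hs
  intro i j
  refine le_trans ?_ (hEnt 0 i j)
  rcases eq_or_ne i j with rfl | h
  · simp [Matrix.one_apply]
  · simp [Matrix.one_apply, h]

lemma B_mono [Nonempty (Fin n)] (hT : Nn T) {s₁ s₂ : ℝ} (h1 : specRad' T < s₁)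
    (h12 : s₁ ≤ s₂) : Ent (1 - s₂⁻¹ • T)⁻¹ (1 - s₁⁻¹ • T)⁻¹ := by
  have h2 : specRad' T < s₂ := lt_of_lt_of_le h1 h12
  obtain ⟨hs1, hB1l, hB1r, _⟩ := s_facts hT h1
  obtain ⟨hs2, hB2l, hB2r, _⟩ := s_facts hT h2
  set B₁ := (1 - s₁⁻¹ • T)⁻¹
  set B₂ := (1 - s₂⁻¹ • T)⁻¹
  have hNnB₁ := Nn_B hT h1
  have hNnB₂ := Nn_B hT h2
  have hmid : Nn ((s₁⁻¹ - s₂⁻¹) • T) := by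
    intro i j
    rw [Matrix.smul_apply, smul_eq_mul]
    have : s₂⁻¹ ≤ s₁⁻¹ := inv_anti₀ hs1 h12
    exact mul_nonneg (by linarith) (hT i j)
  have hkey : B₁ - B₂ = B₁ * ((s₁⁻¹ - s₂⁻¹) • T) * B₂ := by
    have hd : (s₁⁻¹ - s₂⁻¹) • T = (1 - s₂⁻¹ • T) - (1 - s₁⁻¹ • T) := by
      rw [sub_smul]; abel
    rw [hd, Matrix.mul_sub, Matrix.sub_mul, Matrix.mul_assoc, hB2l, Matrix.mul_one,
      hB1r, Matrix.one_mul]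
  intro i j
  have : 0 ≤ (B₁ - B₂) i j := by
    rw [hkey]
    exact ((hNnB₁.mul hmid).mul hNnB₂) i j
  rw [Matrix.sub_apply] at this
  linarith

lemma rho_FB_pos [Nonempty (Fin n)] (hT : Nn T) (hF : Nn F) (hF0 : F ≠ 0)
    (hirr : ∀ i j, ∃ k : ℕ, 0 < k ∧ 0 < ((T + F) ^ k) i j) {s : ℝ}
    (hs : specRad' T < s) : 0 < rhoE (F * (1 - s⁻¹ • T)⁻¹) := by
  obtain ⟨hs0, -, -, hEnt⟩ := s_facts hT hs
  set B := (1 - s⁻¹ • T)⁻¹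
  have hNnB : Nn B := Nn_B hT hs
  have hNnM : Nn (F * B) := hF.mul hNnB
  -- find a positive entry of F
  have hFex : ∃ a b, 0 < F a b := by
    by_contra hc
    push_neg at hc
    refine hF0 ?_
    ext a b
    exact le_antisymm (hc a b) (hF a b)
  obtain ⟨a, b, hFab⟩ := hFex
  -- path from b to a in T + F
  obtain ⟨k, hk0, hk⟩ := hirr b a
  have hTF : Nn (T + F) := fun i j => by
    rw [Matrix.add_apply]; exact add_nonneg (hT i j) (hF i j)
  have hpath := pos_entry_path hTF k b a hk
  have htg : Relation.TransGen (relM T F) a a :=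
    key_trans hT hF hpath a ⟨b, 0, hFab, by simp [Matrix.one_apply]⟩
  -- relM implies positive entry of F * B
  have hmono : Relation.TransGen (fun u v => 0 < (F * B) u v) a a := by
    refine Relation.TransGen.mono (fun u v huv => ?_) _ _ htg
    obtain ⟨p, k', hFp, hTk⟩ := huv
    have hxk : 0 < ((s⁻¹ • T) ^ k') p v := by
      rw [smul_pow, Matrix.smul_apply, smul_eq_mul]
      exact mul_pos (by positivity) hTk
    have h1 : 0 < F u p * ((s⁻¹ • T) ^ k') p v := mul_pos hFp hxk
    have h2 : F u p * ((s⁻¹ • T) ^ k') p v ≤ F u p * B p v :=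
      mul_le_mul_of_nonneg_left (hEnt k' p v) (hF u p)
    exact lt_of_lt_of_le h1 (h2.trans (mul_apply_ge hF hNnB u p v))
  obtain ⟨r, hr1, hr⟩ := transgen_pow hNnM hmono
  exact rhoE_pos hNnM hr1 hr le_rfl

end Main
end QAux

theorem q_strictAnti_and_tendsto_zero {n : ℕ} (T F : Matrix (Fin n) (Fin n) ℝ)
    (hT : ∀ i j, 0 ≤ T i j) (hF : ∀ i j, 0 ≤ F i j)
    (hρ : specRad T < 1) (hF0 : F ≠ 0) (hirr : MatIrred (T + F)) :
    StrictAntiOn (fun s : ℝ => specRad (F * (1 - s⁻¹ • T)⁻¹) / s)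
      (Set.Ioi (specRad T)) ∧
    Filter.Tendsto (fun s : ℝ => specRad (F * (1 - s⁻¹ • T)⁻¹) / s)
      Filter.atTop (nhds 0) := by
  have hspec : ∀ (A : Matrix (Fin n) (Fin n) ℝ), specRad A = QAux.specRad' A := fun _ => rfl
  -- n ≠ 0
  rcases Nat.eq_zero_or_pos n with rfl | hn
  · exact absurd (by ext i j; exact i.elim0) hF0
  haveI : Nonempty (Fin n) := Fin.pos_iff_nonempty.mp hn
  have hTn : QAux.Nn T := hT
  have hFn : QAux.Nn F := hF
  constructor
  · -- strict antitonicity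
    intro s₁ hs₁ s₂ hs₂ h12
    rw [Set.mem_Ioi, hspec] at hs₁ hs₂
    obtain ⟨hs1pos, -, -, -⟩ := QAux.s_facts hTn hs₁
    obtain ⟨hs2pos, -, -, -⟩ := QAux.s_facts hTn hs₂
    have hEnt21 : QAux.Ent (1 - s₂⁻¹ • T)⁻¹ (1 - s₁⁻¹ • T)⁻¹ :=
      QAux.B_mono hTn hs₁ h12.le
    have hNnB₂ := QAux.Nn_B hTn hs₂
    have hentFB : QAux.Ent (F * (1 - s₂⁻¹ • T)⁻¹) (F * (1 - s₁⁻¹ • T)⁻¹) :=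
      QAux.mul_ent_mono hFn hNnB₂ (fun _ _ => le_rfl) hEnt21
    have hρle : QAux.rhoE (F * (1 - s₂⁻¹ • T)⁻¹) ≤ QAux.rhoE (F * (1 - s₁⁻¹ • T)⁻¹) :=
      QAux.rhoE_mono (hFn.mul hNnB₂) hentFB
    have hρpos : 0 < QAux.rhoE (F * (1 - s₂⁻¹ • T)⁻¹) :=
      QAux.rho_FB_pos hTn hFn hF0 hirr hs₂
    have hfin₁ := QAux.rhoE_ne_top (F * (1 - s₁⁻¹ • T)⁻¹)
    have hfin₂ := QAux.rhoE_ne_top (F * (1 - s₂⁻¹ • T)⁻¹)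
    have hr2pos : 0 < specRad (F * (1 - s₂⁻¹ • T)⁻¹) :=
      ENNReal.toReal_pos hρpos.ne' hfin₂
    have hrle : specRad (F * (1 - s₂⁻¹ • T)⁻¹) ≤ specRad (F * (1 - s₁⁻¹ • T)⁻¹) :=
      ENNReal.toReal_mono hfin₁ hρle
    calc specRad (F * (1 - s₂⁻¹ • T)⁻¹) / s₂
        < specRad (F * (1 - s₂⁻¹ • T)⁻¹) / s₁ :=
          div_lt_div_of_pos_left hr2pos hs1pos h12
      _ ≤ specRad (F * (1 - s₁⁻¹ • T)⁻¹) / s₁ :=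
          div_le_div_of_nonneg_right hrle hs1pos.le
  · -- tendsto 0
    have hρ' : QAux.specRad' T < 1 := by rw [← hspec]; exact hρ
    set C : ℝ := specRad (F * (1 - (1:ℝ)⁻¹ • T)⁻¹) with hC
    have hupper : ∀ᶠ s : ℝ in atTop,
        specRad (F * (1 - s⁻¹ • T)⁻¹) / s ≤ C / s := by
      filter_upwards [eventually_ge_atTop (1:ℝ)] with s hs1
      have hs : QAux.specRad' T < s := lt_of_lt_of_le hρ' hs1
      have hs0 : 0 < s := lt_of_le_of_lt (QAux.specRad'_nonneg T) hs
      have hEnt : QAux.Ent (1 - s⁻¹ • T)⁻¹ (1 - (1:ℝ)⁻¹ • T)⁻¹ :=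
        QAux.B_mono hTn hρ' hs1
      have hNnB := QAux.Nn_B hTn hs
      have h1 : QAux.rhoE (F * (1 - s⁻¹ • T)⁻¹) ≤ QAux.rhoE (F * (1 - (1:ℝ)⁻¹ • T)⁻¹) :=
        QAux.rhoE_mono (hFn.mul hNnB)
          (QAux.mul_ent_mono hFn hNnB (fun _ _ => le_rfl) hEnt)
      have h2 : specRad (F * (1 - s⁻¹ • T)⁻¹) ≤ C :=
        ENNReal.toReal_mono (QAux.rhoE_ne_top _) h1
      exact div_le_div_of_nonneg_right h2 hs0.le
    have hlower : ∀ᶠ s : ℝ in atTop,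
        (0 : ℝ) ≤ specRad (F * (1 - s⁻¹ • T)⁻¹) / s := by
      filter_upwards [eventually_ge_atTop (0:ℝ)] with s hs0
      exact div_nonneg ENNReal.toReal_nonneg hs0
    have hCs : Tendsto (fun s : ℝ => C / s) atTop (𝓝 0) :=
      Tendsto.div_atTop tendsto_const_nhds tendsto_id
    exact tendsto_of_tendsto_of_tendsto_of_le_of_le' tendsto_const_nhds hCs hlower hupper
end

section
/- Let T and F be nonnegative n×n matrices with ρ(T) < 1, F ≠ 0, and T + F irreducible with Perron root r = ρ(T+F). Then ρ(F(I−T/r)^{-1}) = r. -/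
open Matrix Filter Topology
open scoped ENNReal NNReal

section PFAuxSection

attribute [local instance] Matrix.linftyOpNormedRing Matrix.linftyOpNormedAlgebra

variable {n : ℕ}

/-- complexification -/
noncomputable def cm (A : Matrix (Fin n) (Fin n) ℝ) : Matrix (Fin n) (Fin n) ℂ :=
  A.map Complex.ofReal

lemma specRad_def (A : Matrix (Fin n) (Fin n) ℝ) :
    specRad A = (spectralRadius ℂ (cm A)).toReal := rfl

lemma cm_pow (A : Matrix (Fin n) (Fin n) ℝ) (k : ℕ) : cm (A ^ k) = (cm A) ^ k := by
  exact (RingHom.mapMatrix (Complex.ofRealHom) (m := Fin n)).map_pow A k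

lemma cm_apply (A : Matrix (Fin n) (Fin n) ℝ) (i j : Fin n) : cm A i j = (A i j : ℂ) := rfl

lemma specRad_nonneg (A : Matrix (Fin n) (Fin n) ℝ) : 0 ≤ specRad A :=
  ENNReal.toReal_nonneg

lemma sr_ne_top (A : Matrix (Fin n) (Fin n) ℂ) : spectralRadius ℂ A ≠ ⊤ := by
  rcases Nat.eq_zero_or_pos n with h | h
  · subst h
    have : Subsingleton (Matrix (Fin 0) (Fin 0) ℂ) := by
      constructor; intro a b; ext i j; exact absurd i.2 (by omega)
    rw [spectrum.SpectralRadius.of_subsingleton]; exact ENNReal.zero_ne_top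
  · have : Nonempty (Fin n) := ⟨⟨0, h⟩⟩
    exact ne_top_of_le_ne_top ENNReal.coe_ne_top (spectrum.spectralRadius_le_nnnorm (𝕜 := ℂ) (a := A))

lemma mem_spectrum_iff (A : Matrix (Fin n) (Fin n) ℂ) (μ : ℂ) :
    μ ∈ spectrum ℂ A ↔ ∃ x ≠ 0, A.mulVec x = μ • x := by
  rw [← AlgEquiv.spectrum_eq (Matrix.toLinAlgEquiv' : Matrix (Fin n) (Fin n) ℂ ≃ₐ[ℂ] _) A,
    ← Module.End.hasEigenvalue_iff_mem_spectrum]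
  constructor
  · intro h
    obtain ⟨x, hx⟩ := h.exists_hasEigenvector
    exact ⟨x, hx.2, by simpa [Matrix.toLinAlgEquiv'_apply] using hx.apply_eq_smul⟩
  · rintro ⟨x, hx0, hx⟩
    exact Module.End.hasEigenvalue_of_hasEigenvector ⟨Module.End.mem_eigenspace_iff.2 (by
      simpa [Matrix.toLinAlgEquiv'_apply] using hx), hx0⟩

lemma norm_le_specRad {A : Matrix (Fin n) (Fin n) ℝ} {μ : ℂ}
    (h : μ ∈ spectrum ℂ (cm A)) : ‖μ‖ ≤ specRad A := by
  have h1 : (‖μ‖₊ : ℝ≥0∞) ≤ spectralRadius ℂ (cm A) := by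
    exact le_iSup₂ (f := fun k (_ : k ∈ spectrum ℂ (cm A)) => (‖k‖₊ : ℝ≥0∞)) μ h
  have := ENNReal.toReal_mono (sr_ne_top _) h1
  exact this

lemma specRad_le_of_forall {A : Matrix (Fin n) (Fin n) ℝ} {c : ℝ} (hc : 0 ≤ c)
    (h : ∀ μ ∈ spectrum ℂ (cm A), ‖μ‖ ≤ c) : specRad A ≤ c := by
  have h1 : spectralRadius ℂ (cm A) ≤ ENNReal.ofReal c := by
    refine iSup₂_le fun μ hμ => ?_
    rw [← enorm_eq_nnnorm, ← ofReal_norm]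
    exact ENNReal.ofReal_le_ofReal (h μ hμ)
  calc specRad A ≤ (ENNReal.ofReal c).toReal := ENNReal.toReal_mono ENNReal.ofReal_ne_top h1
    _ = c := ENNReal.toReal_ofReal hc

lemma exists_norm_eq_specRad [Nonempty (Fin n)] (A : Matrix (Fin n) (Fin n) ℝ) :
    ∃ μ ∈ spectrum ℂ (cm A), ‖μ‖ = specRad A := by
  obtain ⟨μ, hμ, hn⟩ := spectrum.exists_nnnorm_eq_spectralRadius_of_nonempty
    (spectrum.nonempty (cm A))
  exact ⟨μ, hμ, by rw [specRad_def, ← hn]; simp⟩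


/-- Row sums of a nonnegative real matrix are bounded by the linfty operator norm of the
complexification. -/
lemma row_sum_le_norm {A : Matrix (Fin n) (Fin n) ℝ} (hA : ∀ i j, 0 ≤ A i j) (i : Fin n) :
    ∑ j, A i j ≤ ‖cm A‖ := by
  have h1 : ‖cm A‖₊ = Finset.univ.sup fun i => ∑ j, ‖cm A i j‖₊ :=
    Matrix.linfty_opNNNorm_def (cm A)
  have h2 : (∑ j, ‖cm A i j‖₊) ≤ Finset.univ.sup fun i => ∑ j, ‖cm A i j‖₊ :=
    Finset.le_sup (f := fun i => ∑ j, ‖cm A i j‖₊) (Finset.mem_univ i)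
  have h3 : ∑ j, A i j = ((∑ j, ‖cm A i j‖₊ : ℝ≥0) : ℝ) := by
    push_cast
    refine Finset.sum_congr rfl fun j _ => ?_
    rw [cm_apply, Complex.norm_real, Real.norm_eq_abs, abs_of_nonneg (hA i j)]
  rw [h3, ← coe_nnnorm (cm A), h1]
  exact_mod_cast h2

lemma entry_le_norm (M : Matrix (Fin n) (Fin n) ℂ) (i j : Fin n) : ‖M i j‖ ≤ ‖M‖ := by
  have h1 : ‖M‖₊ = Finset.univ.sup fun i => ∑ j, ‖M i j‖₊ := Matrix.linfty_opNNNorm_def M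
  have h2 : ‖M i j‖₊ ≤ ∑ j, ‖M i j‖₊ :=
    Finset.single_le_sum (f := fun j => ‖M i j‖₊) (fun _ _ => zero_le) (Finset.mem_univ j)
  have h3 : (∑ j, ‖M i j‖₊) ≤ Finset.univ.sup fun i => ∑ j, ‖M i j‖₊ :=
    Finset.le_sup (f := fun i => ∑ j, ‖M i j‖₊) (Finset.mem_univ i)
  calc ‖M i j‖ = ((‖M i j‖₊ : ℝ≥0) : ℝ) := rfl
    _ ≤ ((Finset.univ.sup fun i => ∑ j, ‖M i j‖₊ : ℝ≥0) : ℝ) := by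
        exact_mod_cast h2.trans h3
    _ = ‖M‖ := by rw [← coe_nnnorm M, h1]

lemma pow_entries_nonneg {A : Matrix (Fin n) (Fin n) ℝ} (hA : ∀ i j, 0 ≤ A i j) (k : ℕ) :
    ∀ i j, 0 ≤ (A ^ k) i j := by
  induction k with
  | zero => intro i j; by_cases h : i = j <;> simp [Matrix.one_apply, h]
  | succ k ih =>
    intro i j
    rw [pow_succ, Matrix.mul_apply]
    exact Finset.sum_nonneg fun l _ => mul_nonneg (ih i l) (hA l j)

lemma mulVec_mono {A : Matrix (Fin n) (Fin n) ℝ} (hA : ∀ i j, 0 ≤ A i j)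
    {u v : Fin n → ℝ} (h : ∀ j, u j ≤ v j) (i : Fin n) :
    (A.mulVec u) i ≤ (A.mulVec v) i := by
  simp only [Matrix.mulVec, dotProduct]
  exact Finset.sum_le_sum fun j _ => mul_le_mul_of_nonneg_left (h j) (hA i j)

lemma mulVec_nonneg {A : Matrix (Fin n) (Fin n) ℝ} (hA : ∀ i j, 0 ≤ A i j)
    {v : Fin n → ℝ} (h : ∀ j, 0 ≤ v j) (i : Fin n) : 0 ≤ (A.mulVec v) i := by
  simpa [Matrix.mulVec_zero] using mulVec_mono hA (u := 0) (fun j => h j) i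

lemma cm_mulVec_real (A : Matrix (Fin n) (Fin n) ℝ) (w : Fin n → ℝ) (i : Fin n) :
    (cm A).mulVec (fun j => (w j : ℂ)) i = ((A.mulVec w) i : ℂ) := by
  simp only [Matrix.mulVec, dotProduct, cm_apply]
  push_cast
  rfl

/-- A real eigenvalue with a (possibly non-positive) nonzero real eigenvector bounds
the spectral radius from below. -/
lemma le_specRad_of_eigenvec {A : Matrix (Fin n) (Fin n) ℝ} {w : Fin n → ℝ} {r : ℝ}
    (hw : w ≠ 0) (h : A.mulVec w = r • w) (hr : 0 ≤ r) : r ≤ specRad A := by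
  have hmem : (r : ℂ) ∈ spectrum ℂ (cm A) := by
    rw [mem_spectrum_iff]
    refine ⟨fun j => (w j : ℂ), ?_, ?_⟩
    · intro hcontra
      apply hw
      funext j
      have := congrFun hcontra j
      simpa using this
    · funext i
      rw [cm_mulVec_real, h]
      simp
  have := norm_le_specRad hmem
  rwa [Complex.norm_real, Real.norm_eq_abs, abs_of_nonneg hr] at this

/-- Gelfand-based lower bound: if `A z ≥ c z` entrywise for a nonneg vector `z` with a positive
coordinate, then `c ≤ specRad A`. -/
lemma le_specRad_of_subinvariant {A : Matrix (Fin n) (Fin n) ℝ} (hA : ∀ i j, 0 ≤ A i j)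
    {z : Fin n → ℝ} (hz : ∀ j, 0 ≤ z j) {i0 : Fin n} (hi0 : 0 < z i0) {c : ℝ} (hc : 0 ≤ c)
    (h : ∀ i, c * z i ≤ (A.mulVec z) i) : c ≤ specRad A := by
  rcases eq_or_lt_of_le hc with rfl | hcpos
  · exact specRad_nonneg A
  -- iterate: A^k z ≥ c^k z
  have hiter : ∀ k, ∀ i, c ^ k * z i ≤ ((A ^ k).mulVec z) i := by
    intro k
    induction k with
    | zero => intro i; simp [Matrix.one_mulVec]
    | succ k ih =>
      intro i
      have h1 : (A ^ (k+1)).mulVec z = A.mulVec ((A ^ k).mulVec z) := by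
        rw [pow_succ']
        rw [← Matrix.mulVec_mulVec]
      rw [h1]
      have h2 : ∀ j, c ^ k * z j ≤ ((A ^ k).mulVec z) j := ih
      have h3 : (A.mulVec (fun j => c ^ k * z j)) i ≤ (A.mulVec ((A ^ k).mulVec z)) i :=
        mulVec_mono hA h2 i
      have h4 : (A.mulVec (fun j => c ^ k * z j)) i = c ^ k * (A.mulVec z) i := by
        simp only [Matrix.mulVec, dotProduct]
        rw [Finset.mul_sum]
        exact Finset.sum_congr rfl fun j _ => by ring
      calc c ^ (k+1) * z i = c ^ k * (c * z i) := by ring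
        _ ≤ c ^ k * (A.mulVec z) i := by
            exact mul_le_mul_of_nonneg_left (h i) (pow_nonneg hc k)
        _ = (A.mulVec (fun j => c ^ k * z j)) i := h4.symm
        _ ≤ _ := h3
  -- setup constants
  have hne : Nonempty (Fin n) := ⟨i0⟩
  set Z : ℝ := Finset.univ.sup' Finset.univ_nonempty z with hZdef
  have hZz : ∀ j, z j ≤ Z := fun j => Finset.le_sup' z (Finset.mem_univ j)
  have hZpos : 0 < Z := lt_of_lt_of_le hi0 (hZz i0)
  set b : ℝ := z i0 / Z with hbdef
  have hbpos : 0 < b := div_pos hi0 hZpos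
  -- norm bound : c^k * b ≤ ‖(cm A)^k‖
  have hnorm : ∀ k : ℕ, c ^ k * b ≤ ‖(cm A) ^ k‖ := by
    intro k
    have h1 : c ^ k * z i0 ≤ ((A ^ k).mulVec z) i0 := hiter k i0
    have h2 : ((A ^ k).mulVec z) i0 ≤ (∑ j, (A ^ k) i0 j) * Z := by
      rw [Finset.sum_mul]
      simp only [Matrix.mulVec, dotProduct]
      refine Finset.sum_le_sum fun j _ => ?_
      exact mul_le_mul_of_nonneg_left (hZz j) (pow_entries_nonneg hA k i0 j)
    have h3 : (∑ j, (A ^ k) i0 j) ≤ ‖cm (A ^ k)‖ := row_sum_le_norm (pow_entries_nonneg hA k) i0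
    have h4 : c ^ k * z i0 ≤ ‖cm (A ^ k)‖ * Z := by
      refine le_trans h1 (le_trans h2 ?_)
      exact mul_le_mul_of_nonneg_right h3 hZpos.le
    rw [← cm_pow]
    rw [hbdef, ← mul_div_assoc, div_le_iff₀ hZpos]
    linarith
  -- ENNReal sequences
  set f : ℕ → ℝ≥0∞ := fun k => ENNReal.ofReal (c ^ k * b) ^ (1/(k:ℝ)) with hfdef
  set g : ℕ → ℝ≥0∞ := fun k => ((‖(cm A) ^ k‖₊ : ℝ≥0∞)) ^ (1/(k:ℝ)) with hgdef
  have hfg : ∀ k, f k ≤ g k := by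
    intro k
    refine ENNReal.rpow_le_rpow ?_ (by positivity)
    rw [← enorm_eq_nnnorm, ← ofReal_norm]
    exact ENNReal.ofReal_le_ofReal (hnorm k)
  have hg : Tendsto g atTop (𝓝 (spectralRadius ℂ (cm A))) :=
    spectrum.pow_nnnorm_pow_one_div_tendsto_nhds_spectralRadius (cm A)
  have hf : Tendsto f atTop (𝓝 (ENNReal.ofReal c)) := by
    have hreal : Tendsto (fun k : ℕ => c * b ^ (1/(k:ℝ))) atTop (𝓝 c) := by
      have h10 : Tendsto (fun k : ℕ => 1/(k:ℝ)) atTop (𝓝 0) :=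
        tendsto_one_div_atTop_nhds_zero_nat
      have hcont : ContinuousAt (fun x : ℝ => b ^ x) 0 :=
        Real.continuousAt_const_rpow hbpos.ne'
      have := (hcont.tendsto.comp h10).const_mul c
      simpa using this
    have := (ENNReal.continuous_ofReal.tendsto c).comp hreal
    refine this.congr' ?_
    filter_upwards [eventually_ge_atTop 1] with k hk
    have hk0 : (k:ℝ) ≠ 0 := by positivity
    have h1 : (c ^ k * b) ^ (1/(k:ℝ)) = c * b ^ (1/(k:ℝ)) := by
      rw [Real.mul_rpow (by positivity) hbpos.le]
      congr 1
      rw [← Real.rpow_natCast c k, ← Real.rpow_mul hcpos.le]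
      rw [mul_one_div, div_self hk0, Real.rpow_one]
    rw [Function.comp_apply]
    show ENNReal.ofReal (c * b ^ (1/(k:ℝ))) = ENNReal.ofReal (c ^ k * b) ^ (1/(k:ℝ))
    rw [ENNReal.ofReal_rpow_of_pos (by positivity), h1]
  have hle : ENNReal.ofReal c ≤ spectralRadius ℂ (cm A) :=
    le_of_tendsto_of_tendsto' hf hg hfg
  have := ENNReal.toReal_mono (sr_ne_top _) hle
  rwa [ENNReal.toReal_ofReal hc] at this


/-- Upper bound on the spectral radius from a strictly positive dominant vector. -/
lemma specRad_le_of_dominant {A : Matrix (Fin n) (Fin n) ℝ} (hA : ∀ i j, 0 ≤ A i j)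
    {z : Fin n → ℝ} (hz : ∀ i, 0 < z i) {c : ℝ} (hc : 0 ≤ c)
    (h : ∀ i, (A.mulVec z) i ≤ c * z i) : specRad A ≤ c := by
  refine specRad_le_of_forall hc fun μ hμ => ?_
  obtain ⟨x, hx0, hx⟩ := (mem_spectrum_iff _ _).1 hμ
  obtain ⟨j0, hj0⟩ : ∃ j, x j ≠ 0 := by
    by_contra hcon; push_neg at hcon; exact hx0 (funext hcon)
  obtain ⟨i, -, hi⟩ := Finset.exists_max_image Finset.univ (fun i => ‖x i‖ / z i)
    ⟨j0, Finset.mem_univ j0⟩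
  set m : ℝ := ‖x i‖ / z i with hm
  have hmpos : 0 < m := lt_of_lt_of_le (div_pos (norm_pos_iff.2 hj0) (hz j0))
    (hi j0 (Finset.mem_univ j0))
  have hxm : ∀ j, ‖x j‖ ≤ m * z j := fun j => by
    have := hi j (Finset.mem_univ j)
    rw [div_le_iff₀ (hz j)] at this
    linarith
  have hxi : ‖x i‖ = m * z i := by rw [hm, div_mul_cancel₀ _ (hz i).ne']
  have hxipos : 0 < ‖x i‖ := by rw [hxi]; exact mul_pos hmpos (hz i)
  have hkey : ‖μ‖ * ‖x i‖ ≤ c * ‖x i‖ := by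
    have h1 : ((cm A).mulVec x) i = μ * x i := by rw [hx]; simp
    have h2 : ‖μ * x i‖ ≤ ∑ j, A i j * ‖x j‖ := by
      rw [← h1]
      simp only [Matrix.mulVec, dotProduct, cm_apply]
      refine (norm_sum_le _ _).trans ?_
      refine Finset.sum_le_sum fun j _ => ?_
      rw [norm_mul, Complex.norm_real, Real.norm_eq_abs, abs_of_nonneg (hA i j)]
    have h3 : ∑ j, A i j * ‖x j‖ ≤ m * (c * z i) := by
      calc ∑ j, A i j * ‖x j‖ ≤ ∑ j, A i j * (m * z j) :=
            Finset.sum_le_sum fun j _ => mul_le_mul_of_nonneg_left (hxm j) (hA i j)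
        _ = m * (A.mulVec z) i := by
            simp only [Matrix.mulVec, dotProduct, Finset.mul_sum]
            exact Finset.sum_congr rfl fun j _ => by ring
        _ ≤ m * (c * z i) := mul_le_mul_of_nonneg_left (h i) hmpos.le
    calc ‖μ‖ * ‖x i‖ = ‖μ * x i‖ := (norm_mul μ (x i)).symm
      _ ≤ m * (c * z i) := h2.trans h3
      _ = c * ‖x i‖ := by rw [hxi]; ring
  exact le_of_mul_le_mul_right (by linarith [hkey]) hxipos

/-- For an irreducible nonnegative matrix, some partial geometric sum of powers is entrywise
positive. -/
lemma exists_N_sum_pow_pos {A : Matrix (Fin n) (Fin n) ℝ} (hA : ∀ i j, 0 ≤ A i j)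
    (hirr : MatIrred A) :
    ∃ N : ℕ, ∀ i j, 0 < (∑ k ∈ Finset.range (N+1), A ^ k) i j := by
  have hchoice : ∀ p : Fin n × Fin n, ∃ k : ℕ, 0 < k ∧ 0 < (A ^ k) p.1 p.2 :=
    fun p => hirr p.1 p.2
  choose K hK1 hK2 using hchoice
  refine ⟨Finset.univ.sup K, fun i j => ?_⟩
  rw [Matrix.sum_apply]
  refine Finset.sum_pos' (fun k _ => pow_entries_nonneg hA k i j) ?_
  refine ⟨K (i, j), ?_, hK2 (i, j)⟩
  rw [Finset.mem_range]
  exact Nat.lt_succ_of_le (Finset.le_sup (Finset.mem_univ (i, j)))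

lemma sum_pow_comm (A : Matrix (Fin n) (Fin n) ℝ) (N : ℕ) :
    A * (∑ k ∈ Finset.range (N+1), A ^ k) = (∑ k ∈ Finset.range (N+1), A ^ k) * A := by
  rw [Finset.mul_sum, Finset.sum_mul]
  exact Finset.sum_congr rfl fun k _ => (pow_succ A k ▸ pow_succ' A k ▸ rfl : A * A ^ k = A ^ k * A)

lemma eig_pow {A : Matrix (Fin n) (Fin n) ℝ} {v : Fin n → ℝ} {r : ℝ}
    (h : A.mulVec v = r • v) (k : ℕ) : (A ^ k).mulVec v = r ^ k • v := by
  induction k with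
  | zero => simp [Matrix.one_mulVec]
  | succ k ih =>
    rw [pow_succ', ← Matrix.mulVec_mulVec, ih, Matrix.mulVec_smul, h, smul_smul, pow_succ',
      mul_comm]

/-- Core Perron-Frobenius subinvariance lemma. -/
lemma subinv [Nonempty (Fin n)] {A : Matrix (Fin n) (Fin n) ℝ} (hA : ∀ i j, 0 ≤ A i j)
    (hirr : MatIrred A) {z : Fin n → ℝ} (hz : ∀ i, 0 ≤ z i) (hz0 : z ≠ 0)
    (h : ∀ i, specRad A * z i ≤ (A.mulVec z) i) :
    A.mulVec z = specRad A • z ∧ ∀ i, 0 < z i := by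
  set r := specRad A with hrdef
  have hr0 : 0 ≤ r := specRad_nonneg A
  obtain ⟨N, hP⟩ := exists_N_sum_pow_pos hA hirr
  set P := ∑ k ∈ Finset.range (N+1), A ^ k with hPdef
  obtain ⟨j0, hj0⟩ : ∃ j, 0 < z j := by
    by_contra hcon; push_neg at hcon
    exact hz0 (funext fun j => le_antisymm (hcon j) (hz j))
  set w := P.mulVec z with hwdef
  have hw : ∀ i, 0 < w i := fun i => by
    rw [hwdef]
    simp only [Matrix.mulVec, dotProduct]
    exact Finset.sum_pos' (fun j _ => mul_nonneg (hP i j).le (hz j))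
      ⟨j0, Finset.mem_univ j0, mul_pos (hP i j0) hj0⟩
  set y : Fin n → ℝ := fun i => (A.mulVec z) i - r * z i with hydef
  have hy : ∀ i, 0 ≤ y i := fun i => by simp [hydef]; linarith [h i]
  by_cases hy0 : ∀ i, y i = 0
  · have heig : A.mulVec z = r • z := by
      funext i
      have := hy0 i
      simp only [hydef] at this
      simp only [Pi.smul_apply, smul_eq_mul]
      linarith
    refine ⟨heig, fun i => ?_⟩
    have hPz : P.mulVec z = (∑ k ∈ Finset.range (N+1), r ^ k) • z := by
      funext i
      rw [hPdef]
      simp only [Matrix.mulVec, dotProduct, Matrix.sum_apply, Pi.smul_apply, smul_eq_mul,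
        Finset.sum_mul, Finset.mul_sum]
      rw [Finset.sum_comm]
      refine Finset.sum_congr rfl fun k _ => ?_
      have := congrFun (eig_pow heig k) i
      simp only [Matrix.mulVec, dotProduct, Pi.smul_apply, smul_eq_mul] at this
      rw [this]
    have hs : 0 < ∑ k ∈ Finset.range (N+1), r ^ k :=
      Finset.sum_pos' (fun k _ => pow_nonneg hr0 k) ⟨0, by simp⟩
    have := hw i
    rw [hwdef, hPz] at this
    simp only [Pi.smul_apply, smul_eq_mul] at this
    nlinarith [hz i]
  · push_neg at hy0
    obtain ⟨i1, hi1⟩ := hy0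
    have hi1' : 0 < y i1 := lt_of_le_of_ne (hy i1) (Ne.symm hi1)
    exfalso
    have hcomm : A.mulVec w = fun i => r * w i + (P.mulVec y) i := by
      have h1 : A.mulVec w = P.mulVec (A.mulVec z) := by
        rw [hwdef, Matrix.mulVec_mulVec, sum_pow_comm, ← Matrix.mulVec_mulVec]
      have h2 : A.mulVec z = fun i => r * z i + y i := by
        funext i; simp [hydef]
      rw [h1, h2]
      funext i
      simp only [hwdef, Matrix.mulVec, dotProduct]
      rw [Finset.mul_sum, ← Finset.sum_add_distrib]
      refine Finset.sum_congr rfl fun j _ => by ring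
    have hPy : ∀ i, 0 < (P.mulVec y) i := fun i => by
      simp only [Matrix.mulVec, dotProduct]
      exact Finset.sum_pos' (fun j _ => mul_nonneg (hP i j).le (hy j))
        ⟨i1, Finset.mem_univ i1, mul_pos (hP i i1) hi1'⟩
    obtain ⟨im, -, him⟩ := Finset.exists_min_image Finset.univ
      (fun i => (P.mulVec y) i / w i) Finset.univ_nonempty
    set δ := (P.mulVec y) im / w im with hδ
    have hδpos : 0 < δ := div_pos (hPy im) (hw im)
    have hsub : ∀ i, (r + δ) * w i ≤ (A.mulVec w) i := fun i => by
      have h1 : δ ≤ (P.mulVec y) i / w i := him i (Finset.mem_univ i)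
      have h2 : δ * w i ≤ (P.mulVec y) i := by
        rw [← le_div_iff₀ (hw i)]; exact h1
      have h3 := congrFun hcomm i
      rw [h3]; nlinarith [hw i]
    have := le_specRad_of_subinvariant hA (fun j => (hw j).le) (hw im)
      (by linarith : (0:ℝ) ≤ r + δ) hsub
    rw [← hrdef] at this
    linarith


/-- Perron eigenvector existence for irreducible nonnegative matrices. -/
lemma perron [Nonempty (Fin n)] {A : Matrix (Fin n) (Fin n) ℝ} (hA : ∀ i j, 0 ≤ A i j)
    (hirr : MatIrred A) :
    ∃ v : Fin n → ℝ, (∀ i, 0 < v i) ∧ A.mulVec v = specRad A • v := by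
  obtain ⟨μ, hμmem, hμnorm⟩ := exists_norm_eq_specRad A
  obtain ⟨x, hx0, hx⟩ := (mem_spectrum_iff _ _).1 hμmem
  set v : Fin n → ℝ := fun i => ‖x i‖ with hvdef
  have hv : ∀ i, 0 ≤ v i := fun i => norm_nonneg _
  have hv0 : v ≠ 0 := by
    intro hcon
    apply hx0; funext j
    have := congrFun hcon j
    simpa [hvdef, norm_eq_zero] using this
  have hsub : ∀ i, specRad A * v i ≤ (A.mulVec v) i := fun i => by
    rw [← hμnorm]
    have h1 : ((cm A).mulVec x) i = μ * x i := by rw [hx]; simp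
    have h2 : ‖μ * x i‖ ≤ (A.mulVec v) i := by
      rw [← h1]
      simp only [Matrix.mulVec, dotProduct, cm_apply, hvdef]
      refine (norm_sum_le _ _).trans ?_
      refine le_of_eq (Finset.sum_congr rfl fun j _ => ?_)
      rw [norm_mul, Complex.norm_real, Real.norm_eq_abs, abs_of_nonneg (hA i j)]
    calc ‖μ‖ * v i = ‖μ * x i‖ := by rw [norm_mul]
      _ ≤ _ := h2
  obtain ⟨heig, hpos⟩ := subinv hA hirr hv hv0 hsub
  exact ⟨v, hpos, heig⟩

lemma cm_transpose (A : Matrix (Fin n) (Fin n) ℝ) : cm (Aᵀ) = (cm A)ᵀ := rfl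

lemma spectrum_transpose (M : Matrix (Fin n) (Fin n) ℂ) : spectrum ℂ Mᵀ = spectrum ℂ M := by
  ext μ
  rw [spectrum.mem_iff, spectrum.mem_iff]
  have h1 : (algebraMap ℂ (Matrix (Fin n) (Fin n) ℂ)) μ - Mᵀ =
      ((algebraMap ℂ (Matrix (Fin n) (Fin n) ℂ)) μ - M)ᵀ := by
    rw [Matrix.transpose_sub]
    congr 1
    rw [Algebra.algebraMap_eq_smul_one (A := Matrix (Fin n) (Fin n) ℂ),
      Matrix.transpose_smul, Matrix.transpose_one]
  rw [h1]
  have h2 : ∀ (B : Matrix (Fin n) (Fin n) ℂ), IsUnit Bᵀ ↔ IsUnit B := fun B => by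
    rw [Matrix.isUnit_iff_isUnit_det, Matrix.isUnit_iff_isUnit_det, Matrix.det_transpose]
  rw [not_iff_not]
  exact h2 _

lemma specRad_transpose (A : Matrix (Fin n) (Fin n) ℝ) : specRad Aᵀ = specRad A := by
  have : spectralRadius ℂ (cm Aᵀ) = spectralRadius ℂ (cm A) := by
    unfold spectralRadius
    rw [cm_transpose, spectrum_transpose]
  rw [specRad_def, specRad_def, this]

lemma matIrred_transpose {A : Matrix (Fin n) (Fin n) ℝ} (h : MatIrred A) : MatIrred Aᵀ := by
  intro i j
  obtain ⟨k, hk, hpos⟩ := h j i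
  refine ⟨k, hk, ?_⟩
  rw [← Matrix.transpose_pow]
  exact hpos


lemma cm_one_sub (S : Matrix (Fin n) (Fin n) ℝ) : cm (1 - S) = 1 - cm S := by
  have := (RingHom.mapMatrix (Complex.ofRealHom) (m := Fin n)).map_sub 1 S
  rw [_root_.map_one] at this
  exact this

lemma isUnit_one_sub_det {S : Matrix (Fin n) (Fin n) ℝ} (h1 : specRad S < 1) :
    IsUnit (1 - S).det := by
  rw [isUnit_iff_ne_zero]
  intro hdet
  have hdetC : (1 - cm S).det = 0 := by
    rw [← cm_one_sub]
    have : (cm (1 - S)).det = Complex.ofRealHom (1 - S).det :=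
      (RingHom.map_det Complex.ofRealHom (1 - S)).symm ▸ rfl
    rw [this, hdet]
    simp
  have hnu : ¬ IsUnit (1 - cm S) := by
    rw [Matrix.isUnit_iff_isUnit_det, isUnit_iff_ne_zero]
    simp [hdetC]
  have hmem : (1 : ℂ) ∈ spectrum ℂ (cm S) := by
    rw [spectrum.mem_iff, _root_.map_one]
    exact hnu
  have := norm_le_specRad hmem
  simp only [norm_one] at this
  linarith

lemma pow_tendsto_zero {S : Matrix (Fin n) (Fin n) ℝ} (h1 : specRad S < 1) (i j : Fin n) :
    Tendsto (fun K : ℕ => (S ^ K) i j) atTop (𝓝 0) := by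
  have hsr : spectralRadius ℂ (cm S) < ENNReal.ofReal 1 := by
    rw [ENNReal.lt_ofReal_iff_toReal_lt (sr_ne_top _)]
    exact h1
  -- pick q strictly between specRad S and 1
  obtain ⟨q, hq1, hq2⟩ : ∃ q : ℝ, max (specRad S) 0 < q ∧ q < 1 :=
    exists_between (max_lt h1 one_pos)
  have hq0 : 0 < q := lt_of_le_of_lt (le_max_right _ _) hq1
  have hqr : specRad S < q := lt_of_le_of_lt (le_max_left _ _) hq1
  have hqENN : spectralRadius ℂ (cm S) < ENNReal.ofReal q := by
    rw [ENNReal.lt_ofReal_iff_toReal_lt (sr_ne_top _)]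
    exact hqr
  have hgel := spectrum.pow_nnnorm_pow_one_div_tendsto_nhds_spectralRadius (cm S)
  have hev : ∀ᶠ k : ℕ in atTop, ((‖(cm S) ^ k‖₊ : ℝ≥0∞)) ^ (1/(k:ℝ)) < ENNReal.ofReal q :=
    hgel.eventually_lt_const hqENN
  have hnormbound : ∀ᶠ k : ℕ in atTop, ‖(cm S) ^ k‖ ≤ q ^ k := by
    filter_upwards [hev, eventually_ge_atTop 1] with k hk hk1
    have hk0 : (k:ℝ) ≠ 0 := by positivity
    have hxid : ((‖(cm S) ^ k‖₊ : ℝ≥0∞)) =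
        (((‖(cm S) ^ k‖₊ : ℝ≥0∞)) ^ (1/(k:ℝ))) ^ (k:ℕ) := by
      rw [← ENNReal.rpow_natCast ((((‖(cm S) ^ k‖₊ : ℝ≥0∞))) ^ (1/(k:ℝ))) k,
        ← ENNReal.rpow_mul, one_div, inv_mul_cancel₀ hk0, ENNReal.rpow_one]
    have h2 : ((‖(cm S) ^ k‖₊ : ℝ≥0∞)) ≤ (ENNReal.ofReal q) ^ (k:ℕ) := by
      rw [hxid]
      exact pow_le_pow_left' hk.le k
    rw [← ENNReal.ofReal_pow hq0.le] at h2
    have h3 := ENNReal.toReal_mono ENNReal.ofReal_ne_top h2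
    rw [ENNReal.toReal_ofReal (by positivity)] at h3
    simpa using h3
  -- entrywise squeeze
  have hqpow : Tendsto (fun K : ℕ => q ^ K) atTop (𝓝 0) :=
    tendsto_pow_atTop_nhds_zero_of_lt_one hq0.le hq2
  refine squeeze_zero_norm' ?_ hqpow
  filter_upwards [hnormbound] with K hK
  have h4 : ‖(S ^ K) i j‖ = ‖(cm (S ^ K)) i j‖ := by
    rw [cm_apply, Complex.norm_real]
  rw [h4, cm_pow]
  exact (entry_le_norm _ i j).trans hK


lemma inv_entries_nonneg {S : Matrix (Fin n) (Fin n) ℝ} (hS : ∀ i j, 0 ≤ S i j)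
    (h1 : specRad S < 1) : ∀ i j, 0 ≤ (1 - S)⁻¹ i j := by
  have hdet := isUnit_one_sub_det h1
  set B := (1 - S)⁻¹ with hBdef
  have hBid : (1 - S) * B = 1 := Matrix.mul_nonsing_inv _ hdet
  have hgeom : ∀ K, (∑ k ∈ Finset.range K, S ^ k) = B - S ^ K * B := by
    intro K
    have hg : (∑ k ∈ Finset.range K, S ^ k) * (1 - S) = 1 - S ^ K := by
      have hgs := geom_sum_mul S K
      calc (∑ k ∈ Finset.range K, S ^ k) * (1 - S)
          = -((∑ k ∈ Finset.range K, S ^ k) * (S - 1)) := by noncomm_ring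
        _ = -(S ^ K - 1) := by rw [hgs]
        _ = 1 - S ^ K := by noncomm_ring
    calc (∑ k ∈ Finset.range K, S ^ k)
        = (∑ k ∈ Finset.range K, S ^ k) * ((1 - S) * B) := by rw [hBid, mul_one]
      _ = ((∑ k ∈ Finset.range K, S ^ k) * (1 - S)) * B := by rw [mul_assoc]
      _ = (1 - S ^ K) * B := by rw [hg]
      _ = B - S ^ K * B := by noncomm_ring
  intro i j
  have h6 : Tendsto (fun K => (S ^ K * B) i j) atTop (𝓝 0) := by
    have h7 : Tendsto (fun K => ∑ l, (S ^ K) i l * B l j) atTop (𝓝 (∑ l : Fin n, 0 * B l j)) :=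
      tendsto_finset_sum _ fun l _ => (pow_tendsto_zero h1 i l).mul_const (B l j)
    simp only [zero_mul, Finset.sum_const_zero] at h7
    refine h7.congr fun K => ?_
    rw [Matrix.mul_apply]
  have htend : Tendsto (fun K => (∑ k ∈ Finset.range K, S ^ k) i j) atTop (𝓝 (B i j)) := by
    have h8 : Tendsto (fun K => B i j - (S ^ K * B) i j) atTop (𝓝 (B i j - 0)) :=
      tendsto_const_nhds.sub h6
    rw [sub_zero] at h8
    refine h8.congr fun K => ?_
    rw [hgeom K, Matrix.sub_apply]
  refine ge_of_tendsto' htend fun K => ?_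
  rw [Matrix.sum_apply]
  exact Finset.sum_nonneg fun k _ => pow_entries_nonneg hS k i j


lemma cm_smul (a : ℝ) (T : Matrix (Fin n) (Fin n) ℝ) : cm (a • T) = (a : ℂ) • cm T := by
  ext i j
  simp [cm, Matrix.smul_apply]

/-- Triangle inequality for eigenvector absolute values. -/
lemma abs_subinv {A : Matrix (Fin n) (Fin n) ℝ} (hA : ∀ i j, 0 ≤ A i j) {x : Fin n → ℂ}
    {μ : ℂ} (hx : (cm A).mulVec x = μ • x) (i : Fin n) :
    ‖μ‖ * ‖x i‖ ≤ (A.mulVec (fun j => ‖x j‖)) i := by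
  have h1 : ((cm A).mulVec x) i = μ * x i := by rw [hx]; simp
  have h2 : ‖μ * x i‖ ≤ (A.mulVec (fun j => ‖x j‖)) i := by
    rw [← h1]
    simp only [Matrix.mulVec, dotProduct, cm_apply]
    refine (norm_sum_le _ _).trans ?_
    refine le_of_eq (Finset.sum_congr rfl fun j _ => ?_)
    rw [norm_mul, Complex.norm_real, Real.norm_eq_abs, abs_of_nonneg (hA i j)]
  calc ‖μ‖ * ‖x i‖ = ‖μ * x i‖ := by rw [norm_mul]
    _ ≤ _ := h2

end PFAuxSection

theorem specRad_nextgen_at_perron_root {n : ℕ} (T F : Matrix (Fin n) (Fin n) ℝ)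
    (hT : ∀ i j, 0 ≤ T i j) (hF : ∀ i j, 0 ≤ F i j)
    (hρ : specRad T < 1) (hF0 : F ≠ 0) (hirr : MatIrred (T + F))
    (r : ℝ) (hr : r = specRad (T + F)) :
    specRad (F * (1 - r⁻¹ • T)⁻¹) = r := by
  classical
  rcases Nat.eq_zero_or_pos n with hn | hn
  · exfalso
    apply hF0
    subst hn
    funext i j
    exact i.elim0
  have hne : Nonempty (Fin n) := ⟨⟨0, hn⟩⟩
  set A := T + F with hAdef
  have hAnn : ∀ i j, 0 ≤ A i j := fun i j => add_nonneg (hT i j) (hF i j)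
  have hTA : ∀ i j, T i j ≤ A i j := fun i j => by
    simp only [hAdef, Matrix.add_apply]; linarith [hF i j]
  obtain ⟨i1, j1, hFpos⟩ : ∃ i j, 0 < F i j := by
    by_contra hcon
    push_neg at hcon
    exact hF0 (funext fun i => funext fun j => le_antisymm (hcon i j) (hF i j))
  -- Perron vectors
  obtain ⟨v, hv, hveig⟩ := perron hAnn hirr
  have hATnn : ∀ i j, 0 ≤ Aᵀ i j := fun i j => hAnn j i
  obtain ⟨u, hu, hueig⟩ := perron hATnn (matIrred_transpose hirr)
  rw [specRad_transpose] at hueig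
  rw [← hr] at hveig hueig
  have hr0 : 0 ≤ r := hr ▸ specRad_nonneg A
  -- r is positive
  have hrpos : 0 < r := by
    have hA11 : 0 < A i1 j1 := by
      simp only [hAdef, Matrix.add_apply]
      linarith [hT i1 j1]
    have h1 : 0 < (A.mulVec v) i1 := by
      simp only [Matrix.mulVec, dotProduct]
      refine Finset.sum_pos' (fun j _ => mul_nonneg (hAnn i1 j) (hv j).le) ?_
      exact ⟨j1, Finset.mem_univ j1, mul_pos hA11 (hv j1)⟩
    rw [hveig] at h1
    simp only [Pi.smul_apply, smul_eq_mul] at h1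
    nlinarith [hv i1]
  -- specRad T < r
  have hTlt : specRad T < r := by
    have hTle : specRad T ≤ r := by
      rw [← specRad_transpose T]
      refine specRad_le_of_dominant (fun i j => hT j i) hu hr0 fun j => ?_
      have h1 : (Matrix.transpose T |>.mulVec u) j ≤ (Aᵀ.mulVec u) j := by
        simp only [Matrix.mulVec, dotProduct, Matrix.transpose_apply]
        exact Finset.sum_le_sum fun i _ => mul_le_mul_of_nonneg_right (hTA i j) (hu i).le
      rw [hueig] at h1
      simp at h1
      exact h1
    rcases lt_or_eq_of_le hTle with h | h
    · exact h
    · exfalso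
      -- specRad Tᵀ = r; extract eigenvector of modulus r
      have hTT : specRad Tᵀ = r := by rw [specRad_transpose]; exact h
      obtain ⟨μ, hμmem, hμnorm⟩ := exists_norm_eq_specRad Tᵀ
      obtain ⟨x, hx0, hxeig⟩ := (mem_spectrum_iff _ _).1 hμmem
      set z : Fin n → ℝ := fun i => ‖x i‖ with hzdef
      have hz : ∀ i, 0 ≤ z i := fun i => norm_nonneg _
      have hz0 : z ≠ 0 := by
        intro hcon
        apply hx0
        funext j
        have := congrFun hcon j
        simpa [hzdef, norm_eq_zero] using this
      have hTz : ∀ j, r * z j ≤ (Tᵀ.mulVec z) j := fun j => by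
        have := abs_subinv (fun i j => hT j i) hxeig j
        rwa [hμnorm, hTT] at this
      have hAz : ∀ j, specRad Aᵀ * z j ≤ (Aᵀ.mulVec z) j := fun j => by
        have h2 : (Tᵀ.mulVec z) j ≤ (Aᵀ.mulVec z) j := by
          simp only [Matrix.mulVec, dotProduct, Matrix.transpose_apply]
          exact Finset.sum_le_sum fun i _ => mul_le_mul_of_nonneg_right (hTA i j) (hz i)
        have h3 : specRad Aᵀ = r := by rw [specRad_transpose, ← hr]
        rw [h3]
        exact (hTz j).trans h2
      obtain ⟨heig, hposz⟩ := subinv hATnn (matIrred_transpose hirr) hz hz0 hAz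
      have h3 : specRad Aᵀ = r := by rw [specRad_transpose, ← hr]
      rw [h3] at heig
      -- Fᵀ z = 0 at column j1, contradiction
      have h4 : (Aᵀ.mulVec z) j1 = (Tᵀ.mulVec z) j1 + ∑ i, F i j1 * z i := by
        simp only [Matrix.mulVec, dotProduct, Matrix.transpose_apply, hAdef,
          Matrix.add_apply, ← Finset.sum_add_distrib]
        exact Finset.sum_congr rfl fun i _ => by ring
      have h5 : (Aᵀ.mulVec z) j1 = r * z j1 := by rw [heig]; simp
      have h6 : ∑ i, F i j1 * z i ≤ 0 := by
        have := hTz j1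
        linarith [h4, h5]
      have h7 : 0 < ∑ i, F i j1 * z i := by
        refine Finset.sum_pos' (fun i _ => mul_nonneg (hF i j1) (hz i)) ?_
        exact ⟨i1, Finset.mem_univ i1, mul_pos hFpos (hposz i1)⟩
      linarith
  -- the matrix S and its inverse
  set S := r⁻¹ • T with hSdef
  have hSnn : ∀ i j, 0 ≤ S i j := fun i j => by
    simp only [hSdef, Matrix.smul_apply, smul_eq_mul]
    exact mul_nonneg (by positivity) (hT i j)
  have hSsr : specRad S < 1 := by
    have hle : specRad S ≤ specRad T / r := by
      refine specRad_le_of_forall (div_nonneg (specRad_nonneg T) hr0) fun μ hμ => ?_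
      obtain ⟨x, hx0, hxeig⟩ := (mem_spectrum_iff _ _).1 hμ
      have hTeig : (cm T).mulVec x = ((r : ℂ) * μ) • x := by
        have h1 : cm S = ((r⁻¹ : ℝ) : ℂ) • cm T := cm_smul r⁻¹ T
        rw [h1, Matrix.smul_mulVec] at hxeig
        have h2 : ((r : ℂ)) • (((r⁻¹ : ℝ) : ℂ) • (cm T).mulVec x) = ((r:ℂ)) • (μ • x) := by
          rw [hxeig]
        rw [smul_smul, smul_smul] at h2
        have h3 : (r : ℂ) * ((r⁻¹ : ℝ) : ℂ) = 1 := by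
          push_cast
          rw [mul_inv_cancel₀ (by exact_mod_cast hrpos.ne')]
        rw [h3, one_smul] at h2
        exact h2
      have hmem : ((r:ℂ) * μ) ∈ spectrum ℂ (cm T) :=
        (mem_spectrum_iff _ _).2 ⟨x, hx0, hTeig⟩
      have := norm_le_specRad hmem
      rw [norm_mul, Complex.norm_real, Real.norm_eq_abs, abs_of_nonneg hr0] at this
      rw [le_div_iff₀ hrpos]
      linarith [this]
    calc specRad S ≤ specRad T / r := hle
      _ < 1 := (div_lt_one hrpos).2 hTlt
  have hdet : IsUnit (1 - S).det := isUnit_one_sub_det hSsr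
  have hB : ∀ i j, 0 ≤ (1 - S)⁻¹ i j := inv_entries_nonneg hSnn hSsr
  set B := (1 - S)⁻¹ with hBdef
  have hBid1 : (1 - S) * B = 1 := Matrix.mul_nonsing_inv _ hdet
  have hBid2 : B * (1 - S) = 1 := Matrix.nonsing_inv_mul _ hdet
  set M := F * B with hMdef
  have hMnn : ∀ i j, 0 ≤ M i j := fun i j => by
    rw [hMdef, Matrix.mul_apply]
    exact Finset.sum_nonneg fun l _ => mul_nonneg (hF i l) (hB l j)
  -- eigen equation for A
  have hsplit : T.mulVec v + F.mulVec v = r • v := by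
    rw [← Matrix.add_mulVec, ← hAdef, hveig]
  -- lower bound
  have hlow : r ≤ specRad M := by
    set w := (1 - S).mulVec v with hwdef
    have hrw : r • w = F.mulVec v := by
      rw [hwdef, Matrix.sub_mulVec, Matrix.one_mulVec, hSdef, Matrix.smul_mulVec,
        smul_sub, smul_smul, mul_inv_cancel₀ hrpos.ne', one_smul]
      rw [← hsplit]
      abel
    have hFv : 0 < (F.mulVec v) i1 := by
      simp only [Matrix.mulVec, dotProduct]
      exact Finset.sum_pos' (fun j _ => mul_nonneg (hF i1 j) (hv j).le)
        ⟨j1, Finset.mem_univ j1, mul_pos hFpos (hv j1)⟩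
    have hw0 : w ≠ 0 := by
      intro hcon
      rw [hcon, smul_zero] at hrw
      rw [← hrw] at hFv
      simp at hFv
    have hMw : M.mulVec w = r • w := by
      have hBw : B.mulVec w = v := by
        rw [hwdef, Matrix.mulVec_mulVec, hBid2, Matrix.one_mulVec]
      rw [hMdef, ← Matrix.mulVec_mulVec, hBw]
      exact hrw.symm
    exact le_specRad_of_eigenvec hw0 hMw hr0
  -- upper bound
  have hup : specRad M ≤ r := by
    rw [← specRad_transpose M]
    have hMTnn : ∀ i j, 0 ≤ Mᵀ i j := fun i j => hMnn j i
    refine specRad_le_of_dominant hMTnn hu hr0 fun j => ?_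
    have hFu : Fᵀ.mulVec u = ((1 - S)ᵀ).mulVec (r • u) := by
      have h1 : Aᵀ.mulVec u = Tᵀ.mulVec u + Fᵀ.mulVec u := by
        rw [hAdef, Matrix.transpose_add, Matrix.add_mulVec]
      rw [Matrix.transpose_sub, Matrix.transpose_one, Matrix.sub_mulVec, Matrix.one_mulVec,
        hSdef, Matrix.transpose_smul, Matrix.smul_mulVec]
      rw [Matrix.mulVec_smul, smul_smul, inv_mul_cancel₀ hrpos.ne', one_smul]
      rw [hueig] at h1
      funext i
      have := congrFun h1 i
      simp only [Pi.sub_apply, Pi.add_apply, Pi.smul_apply, smul_eq_mul] at this ⊢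
      linarith
    have hMu : Mᵀ.mulVec u = r • u := by
      rw [hMdef, Matrix.transpose_mul, ← Matrix.mulVec_mulVec, hFu, Matrix.mulVec_mulVec,
        ← Matrix.transpose_mul, hBid1, Matrix.transpose_one, Matrix.one_mulVec]
    rw [hMu]
    simp
  exact le_antisymm hup hlow
end

section
/- Let T and F be nonnegative n×n matrices with ρ(T) < 1, F ≠ 0, and T + F irreducible, and let Q = F(I−T)^{-1}. Then every column of Q contains a positive entry. -/
open Matrix Filter Topology

section Aux

attribute [local instance] Matrix.linftyOpNormedRing Matrix.linftyOpNormedAlgebra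

variable {n : ℕ}

/-- entry evaluation as a continuous linear map (w.r.t. the linfty operator norm). -/
noncomputable def entryCLM (i j : Fin n) :
    Matrix (Fin n) (Fin n) ℝ →L[ℝ] ℝ :=
  LinearMap.mkContinuous
    { toFun := fun M => M i j
      map_add' := fun _ _ => rfl
      map_smul' := fun _ _ => rfl } 1
    (fun M => by
      rw [one_mul]
      have h1 : ‖M i j‖₊ ≤ ∑ l, ‖M i l‖₊ :=
        Finset.single_le_sum (f := fun l => ‖M i l‖₊) (fun _ _ => zero_le)
          (Finset.mem_univ j)
      have h2 : (∑ l, ‖M i l‖₊) ≤ ‖M‖₊ := by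
        rw [Matrix.linfty_opNNNorm_def]
        exact Finset.le_sup (f := fun i => ∑ l, ‖M i l‖₊) (Finset.mem_univ i)
      exact_mod_cast h1.trans h2)

lemma pow_entry_nonneg (T : Matrix (Fin n) (Fin n) ℝ) (hT : ∀ i j, 0 ≤ T i j) :
    ∀ k i j, 0 ≤ (T ^ k) i j := by
  intro k
  induction k with
  | zero =>
    intro i j
    rw [pow_zero]
    by_cases h : i = j <;> simp [Matrix.one_apply, h]
  | succ m ih =>
    intro i j
    rw [pow_succ, Matrix.mul_apply]
    exact Finset.sum_nonneg fun l _ => mul_nonneg (ih i l) (hT l j)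

lemma exists_nonneg_inverse [NeZero n] (T : Matrix (Fin n) (Fin n) ℝ)
    (hT : ∀ i j, 0 ≤ T i j) (hρ : specRad T < 1) :
    ∃ M : Matrix (Fin n) (Fin n) ℝ, (1 - T) * M = 1 ∧ ∀ i j, 0 ≤ M i j := by
  haveI : Nonempty (Fin n) := ⟨⟨0, Nat.pos_of_ne_zero (NeZero.ne n)⟩⟩
  haveI : CompleteSpace (Matrix (Fin n) (Fin n) ℂ) := FiniteDimensional.complete ℂ _
  haveI : CompleteSpace (Matrix (Fin n) (Fin n) ℝ) := FiniteDimensional.complete ℝ _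
  set A : Matrix (Fin n) (Fin n) ℂ := T.map Complex.ofReal with hA
  -- spectral radius < 1 as an ℝ≥0∞ statement
  have hne : spectralRadius ℂ A ≠ ⊤ :=
    ((spectrum.spectralRadius_le_nnnorm (𝕜 := ℂ) A).trans_lt ENNReal.coe_lt_top).ne
  have hρ1 : spectralRadius ℂ A < 1 := by
    rw [← ENNReal.toReal_lt_toReal hne ENNReal.one_ne_top]
    simpa [specRad] using hρ
  -- Gelfand's formula gives a power with norm < 1
  have hG := spectrum.pow_nnnorm_pow_one_div_tendsto_nhds_spectralRadius A
  have hev : ∀ᶠ k : ℕ in atTop, (‖A ^ k‖₊ : ENNReal) ^ (1 / (k : ℝ)) < 1 :=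
    hG.eventually_lt_const hρ1
  obtain ⟨m, hmlt, hm1⟩ := (hev.and (eventually_ge_atTop 1)).exists
  have hAm : (‖A ^ m‖₊ : ENNReal) < 1 := by
    by_contra h
    push_neg at h
    have : (1 : ENNReal) ≤ (‖A ^ m‖₊ : ENNReal) ^ (1 / (m : ℝ)) := by
      have := ENNReal.rpow_le_rpow h (by positivity : (0:ℝ) ≤ 1 / (m:ℝ))
      simpa using this
    exact absurd hmlt (not_lt.mpr this)
  -- transfer to the real matrix
  have hmap : ∀ k : ℕ, (T ^ k).map Complex.ofReal = A ^ k := by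
    intro k
    have h := map_pow (Complex.ofRealHom.mapMatrix (m := Fin n)) T k
    rw [RingHom.mapMatrix_apply, RingHom.mapMatrix_apply] at h
    exact h
  have hnorm_eq : ∀ B : Matrix (Fin n) (Fin n) ℝ, ‖B.map Complex.ofReal‖₊ = ‖B‖₊ := by
    intro B
    simp [Matrix.linfty_opNNNorm_def, Matrix.map_apply]
  have hTm : ‖T ^ m‖ < 1 := by
    have : (‖T ^ m‖₊ : ENNReal) < 1 := by rw [← hnorm_eq, hmap]; exact hAm
    have h2 : ‖T ^ m‖₊ < 1 := by exact_mod_cast this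
    exact_mod_cast h2
  set B : Matrix (Fin n) (Fin n) ℝ := T ^ m with hB
  have hsum : Summable fun k : ℕ => B ^ k := summable_geometric_of_norm_lt_one hTm
  set S : Matrix (Fin n) (Fin n) ℝ := ∑' k : ℕ, B ^ k with hS
  have hSinv : (1 - B) * S = 1 := mul_neg_geom_series B hTm
  have hSnn : ∀ i j, 0 ≤ S i j := by
    intro i j
    have hhs : HasSum (fun k : ℕ => (B ^ k) i j) (S i j) := by
      have := (entryCLM i j).hasSum hsum.hasSum
      exact this
    refine hhs.nonneg fun k => ?_
    have : B ^ k = T ^ (m * k) := by rw [hB, ← pow_mul]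
    rw [this]
    exact pow_entry_nonneg T hT _ i j
  refine ⟨(∑ k ∈ Finset.range m, T ^ k) * S, ?_, ?_⟩
  · calc (1 - T) * ((∑ k ∈ Finset.range m, T ^ k) * S)
        = ((1 - T) * ∑ k ∈ Finset.range m, T ^ k) * S := by rw [mul_assoc]
      _ = (1 - B) * S := by rw [mul_neg_geom_sum]
      _ = 1 := hSinv
  · intro i j
    rw [Matrix.mul_apply]
    refine Finset.sum_nonneg fun l _ => mul_nonneg ?_ (hSnn l j)
    rw [Matrix.sum_apply]
    exact Finset.sum_nonneg fun k _ => pow_entry_nonneg T hT k i l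

end Aux

theorem nextgen_columns_positive {n : ℕ} (T F : Matrix (Fin n) (Fin n) ℝ)
    (hT : ∀ i j, 0 ≤ T i j) (hF : ∀ i j, 0 ≤ F i j)
    (hρ : specRad T < 1) (hF0 : F ≠ 0) (hirr : MatIrred (T + F)) :
    ∀ j, ∃ i, 0 < (F * (1 - T)⁻¹) i j := by
  intro j
  haveI : NeZero n := ⟨(Fin.pos j).ne'⟩
  obtain ⟨M, hM1, hMnn⟩ := exists_nonneg_inverse T hT hρ
  rw [Matrix.inv_eq_right_inv hM1]
  by_contra hcon
  push_neg at hcon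
  -- the entries of F * M in column j are all zero
  have hFMnn : ∀ i, 0 ≤ (F * M) i j := fun i => by
    rw [Matrix.mul_apply]
    exact Finset.sum_nonneg fun l _ => mul_nonneg (hF i l) (hMnn l j)
  have hFM0 : ∀ i, (F * M) i j = 0 := fun i => le_antisymm (hcon i) (hFMnn i)
  -- M = 1 + T * M
  have hMid : M = 1 + T * M := by
    have h := hM1
    rw [sub_mul, one_mul] at h
    exact sub_eq_iff_eq_add.mp h
  have hTMnn : ∀ i, 0 ≤ (T * M) i j := fun i => by
    rw [Matrix.mul_apply]
    exact Finset.sum_nonneg fun l _ => mul_nonneg (hT i l) (hMnn l j)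
  -- j is in the "positive" set
  have hSj : 0 < M j j := by
    rw [hMid, Matrix.add_apply, Matrix.one_apply_eq]
    linarith [hTMnn j]
  -- columns of F vanish on positive indices
  have hFcol : ∀ k, 0 < M k j → ∀ i, F i k = 0 := by
    intro k hk i
    have hsum : ∑ l, F i l * M l j = 0 := by
      rw [← Matrix.mul_apply]; exact hFM0 i
    have h0 : F i k * M k j = 0 := by
      have := (Finset.sum_eq_zero_iff_of_nonneg
        (fun l _ => mul_nonneg (hF i l) (hMnn l j))).mp hsum k (Finset.mem_univ k)
      exact this
    rcases mul_eq_zero.mp h0 with h | h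
    · exact h
    · exact absurd h hk.ne'
  -- predecessor closure under T
  have hTpred : ∀ i k, 0 < T i k → 0 < M k j → 0 < M i j := by
    intro i k hik hk
    have hle : T i k * M k j ≤ (T * M) i j := by
      rw [Matrix.mul_apply]
      refine Finset.single_le_sum (f := fun l => T i l * M l j)
        (fun l _ => mul_nonneg (hT i l) (hMnn l j)) (Finset.mem_univ k)
    have h1 : 0 ≤ (1 : Matrix (Fin n) (Fin n) ℝ) i j := by
      by_cases h : i = j <;> simp [Matrix.one_apply, h]
    have : 0 < (T * M) i j := lt_of_lt_of_le (mul_pos hik hk) hle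
    rw [hMid, Matrix.add_apply]
    linarith
  -- predecessor closure under T + F
  have hApred : ∀ i k, 0 < (T + F) i k → 0 < M k j → 0 < M i j := by
    intro i k hik hk
    have hFik : F i k = 0 := hFcol k hk i
    have : 0 < T i k := by
      have := Matrix.add_apply T F i k
      rw [Matrix.add_apply, hFik, add_zero] at hik
      exact hik
    exact hTpred i k this hk
  have hAnn : ∀ i k, 0 ≤ (T + F) i k := fun i k => by
    rw [Matrix.add_apply]; exact add_nonneg (hT i k) (hF i k)
  -- closure under powers
  have hpow : ∀ m : ℕ, ∀ i k, 0 < ((T + F) ^ m) i k → 0 < M k j → 0 < M i j := by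
    intro m
    induction m with
    | zero =>
      intro i k h hk
      rw [pow_zero] at h
      by_cases hik : i = k
      · rw [hik]; exact hk
      · rw [Matrix.one_apply_ne hik] at h; exact absurd h (lt_irrefl 0)
    | succ p ih =>
      intro i k h hk
      rw [pow_succ', Matrix.mul_apply] at h
      have : ∑ l : Fin n, (0:ℝ) < ∑ l, (T + F) i l * ((T + F) ^ p) l k := by
        simpa using h
      obtain ⟨l, -, hl⟩ := Finset.exists_lt_of_sum_lt this
      rcases mul_pos_iff.mp hl with ⟨h1, h2⟩ | ⟨h1, h2⟩
      · exact hApred i l h1 (ih l k h2 hk)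
      · exact absurd h1 (not_lt.mpr (hAnn i l))
  -- from irreducibility, M · j > 0 everywhere, so F = 0
  have hall : ∀ i, 0 < M i j := by
    intro i
    obtain ⟨m, hm0, hm⟩ := hirr i j
    exact hpow m i j hm hSj
  apply hF0
  ext i k
  exact (hFcol k (hall k) i).trans rfl
end

section
/- Let P be a primitive nonnegative n×n matrix with spectral radius r = ρ(P), and let v, u be positive left and right eigenvectors of P for eigenvalue r, normalized so that vᵀu = 1. Then lim_{k→∞} (P/r)^k = u vᵀ. -/
open Matrix Filter Topology

section Aux
variable {n : ℕ} [NeZero n]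

noncomputable def vMax (x : Fin n → ℝ) : ℝ := Finset.univ.sup' Finset.univ_nonempty x
noncomputable def vMin (x : Fin n → ℝ) : ℝ := Finset.univ.inf' Finset.univ_nonempty x

lemma le_vMax (x : Fin n → ℝ) (i : Fin n) : x i ≤ vMax x :=
  Finset.le_sup' x (Finset.mem_univ i)

lemma vMin_le (x : Fin n → ℝ) (i : Fin n) : vMin x ≤ x i :=
  Finset.inf'_le x (Finset.mem_univ i)

lemma vMin_le_vMax (x : Fin n → ℝ) : vMin x ≤ vMax x :=
  (vMin_le x (Classical.arbitrary _)).trans (le_vMax x _)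

lemma osc_step (A : Matrix (Fin n) (Fin n) ℝ)
    (hrow : ∀ i, ∑ j, A i j = 1) {δ : ℝ} (hδ0 : 0 ≤ δ) (hδ : ∀ i j, δ ≤ A i j)
    (x : Fin n → ℝ) :
    vMax (A.mulVec x) - vMin (A.mulVec x) ≤ (1 - δ) * (vMax x - vMin x) := by
  have key : ∀ i j, A.mulVec x i - A.mulVec x j ≤ (1 - δ) * (vMax x - vMin x) := by
    intro i j
    set b : Fin n → ℝ := fun l => min (A i l) (A j l) with hb
    have hbi : ∀ l, 0 ≤ A i l - b l := fun l => by simp [hb]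
    have hbj : ∀ l, 0 ≤ A j l - b l := fun l => by simp [hb]
    have hsb : δ ≤ ∑ l, b l := by
      have h1 : (n : ℝ) * δ ≤ ∑ l, b l := by
        have : ∑ _l : Fin n, δ ≤ ∑ l, b l :=
          Finset.sum_le_sum fun l _ => le_min (hδ i l) (hδ j l)
        simpa [mul_comm] using this
      have h2 : (1:ℝ) ≤ n := by
        exact_mod_cast Nat.one_le_iff_ne_zero.mpr (NeZero.ne n)
      nlinarith
    have hMm : 0 ≤ vMax x - vMin x := sub_nonneg.mpr (vMin_le_vMax x)
    have e1 : A.mulVec x i - A.mulVec x j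
        = ∑ l, (A i l - b l) * x l - ∑ l, (A j l - b l) * x l := by
      simp only [Matrix.mulVec, dotProduct, sub_mul, Finset.sum_sub_distrib]
      ring
    rw [e1]
    have hub : ∑ l, (A i l - b l) * x l ≤ (1 - ∑ l, b l) * vMax x := by
      have : ∑ l, (A i l - b l) * x l ≤ ∑ l, (A i l - b l) * vMax x :=
        Finset.sum_le_sum fun l _ => mul_le_mul_of_nonneg_left (le_vMax x l) (hbi l)
      calc ∑ l, (A i l - b l) * x l ≤ ∑ l, (A i l - b l) * vMax x := this
        _ = (1 - ∑ l, b l) * vMax x := by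
            rw [← Finset.sum_mul, Finset.sum_sub_distrib, hrow i]
    have hlb : (1 - ∑ l, b l) * vMin x ≤ ∑ l, (A j l - b l) * x l := by
      have : ∑ l, (A j l - b l) * vMin x ≤ ∑ l, (A j l - b l) * x l :=
        Finset.sum_le_sum fun l _ => mul_le_mul_of_nonneg_left (vMin_le x l) (hbj l)
      calc (1 - ∑ l, b l) * vMin x = ∑ l, (A j l - b l) * vMin x := by
            rw [← Finset.sum_mul, Finset.sum_sub_distrib, hrow j]
        _ ≤ _ := this
    have : ∑ l, (A i l - b l) * x l - ∑ l, (A j l - b l) * x l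
        ≤ (1 - ∑ l, b l) * (vMax x - vMin x) := by
      have := sub_le_sub hub hlb
      linarith [this]
    refine this.trans ?_
    exact mul_le_mul_of_nonneg_right (by linarith) hMm
  obtain ⟨i, -, hi⟩ := Finset.exists_mem_eq_sup' (Finset.univ_nonempty) (A.mulVec x)
  obtain ⟨j, -, hj⟩ := Finset.exists_mem_eq_inf' (Finset.univ_nonempty) (A.mulVec x)
  rw [vMax, vMin, hi, hj]
  exact key i j

end Aux

theorem primitive_power_limit {n : ℕ} (P : Matrix (Fin n) (Fin n) ℝ)
    (hP : ∀ i j, 0 ≤ P i j) (hprim : MatPrimitive P)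
    (r : ℝ) (hr : r = specRad P)
    (u v : Fin n → ℝ) (hu : ∀ i, 0 < u i) (hv : ∀ i, 0 < v i)
    (hue : P.mulVec u = r • u) (hve : P.vecMul v = r • v)
    (hnorm : v ⬝ᵥ u = 1) :
    Filter.Tendsto (fun k : ℕ => (r⁻¹ • P) ^ k) Filter.atTop
      (nhds (Matrix.vecMulVec u v)) := by
  clear hr
  rcases Nat.eq_zero_or_pos n with hn | hn
  · subst hn
    have : (fun k : ℕ => (r⁻¹ • P) ^ k) = fun _ => Matrix.vecMulVec u v :=
      funext fun k => Subsingleton.elim _ _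
    rw [this]; exact tendsto_const_nhds
  haveI : NeZero n := ⟨hn.ne'⟩
  obtain ⟨m, hm, hPm⟩ := hprim
  set i0 : Fin n := ⟨0, hn⟩ with hi0
  -- powers of P act on u
  have hPku : ∀ k : ℕ, (P ^ k).mulVec u = r ^ k • u := by
    intro k
    induction k with
    | zero => simp
    | succ k ih =>
      rw [pow_succ', ← Matrix.mulVec_mulVec, ih, Matrix.mulVec_smul, hue,
        smul_smul, ← pow_succ]
  -- r > 0
  have hr0 : 0 ≤ r := by
    have h := congrFun hue i0
    have hge : 0 ≤ P.mulVec u i0 := by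
      simp only [Matrix.mulVec, dotProduct]
      exact Finset.sum_nonneg fun j _ => mul_nonneg (hP i0 j) (hu j).le
    rw [h] at hge
    simp only [Pi.smul_apply, smul_eq_mul] at hge
    nlinarith [hu i0]
  have hrm : 0 < r ^ m * u i0 := by
    have h := congrFun (hPku m) i0
    have hpos : 0 < (P ^ m).mulVec u i0 := by
      simp only [Matrix.mulVec, dotProduct]
      exact Finset.sum_pos (fun j _ => mul_pos (hPm i0 j) (hu j)) Finset.univ_nonempty
    rw [h] at hpos
    simpa using hpos
  have hrpos : 0 < r := by
    rcases hr0.lt_or_eq with h | h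
    · exact h
    · exfalso; rw [← h, zero_pow hm.ne', zero_mul] at hrm; exact lt_irrefl 0 hrm
  set Q : Matrix (Fin n) (Fin n) ℝ := r⁻¹ • P with hQ
  have hQnn : ∀ i j, 0 ≤ Q i j := fun i j =>
    mul_nonneg (inv_nonneg.mpr hr0) (hP i j)
  have hQu : Q.mulVec u = u := by
    rw [hQ, Matrix.smul_mulVec, hue, smul_smul,
      inv_mul_cancel₀ hrpos.ne', one_smul]
  have hvQ : v ᵥ* Q = v := by
    have hsm : v ᵥ* (r⁻¹ • P) = r⁻¹ • (v ᵥ* P) := by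
      funext j
      simp [Matrix.vecMul, dotProduct, Finset.mul_sum, Matrix.smul_apply, smul_eq_mul,
        mul_left_comm]
    rw [hQ, hsm, hve, smul_smul, inv_mul_cancel₀ hrpos.ne', one_smul]
  have hQm : ∀ i j, 0 < (Q ^ m) i j := by
    intro i j
    have he : (Q ^ m) = (r⁻¹) ^ m • P ^ m := smul_pow r⁻¹ P m
    rw [he]
    have : ((r⁻¹) ^ m • P ^ m) i j = (r⁻¹) ^ m * (P ^ m) i j := rfl
    rw [this]
    exact mul_pos (pow_pos (inv_pos.mpr hrpos) m) (hPm i j)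
  -- the stochastic conjugate S
  set S : Matrix (Fin n) (Fin n) ℝ := Matrix.of (fun i j => Q i j * u j / u i) with hS
  have hSapp : ∀ i j, S i j = Q i j * u j / u i := fun i j => rfl
  have hSpow : ∀ (k : ℕ) (i j : Fin n), (S ^ k) i j = (Q ^ k) i j * u j / u i := by
    intro k
    induction k with
    | zero =>
      intro i j
      by_cases h : i = j
      · subst h; simp [Matrix.one_apply_eq, (hu i).ne']
      · simp [Matrix.one_apply_ne h]
    | succ k ih =>
      intro i j
      rw [pow_succ, pow_succ, Matrix.mul_apply, Matrix.mul_apply]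
      have hterm : ∀ l, (S ^ k) i l * S l j = (Q ^ k) i l * Q l j * (u j / u i) := by
        intro l
        rw [ih i l, hSapp l j]
        field_simp [(hu l).ne', (hu i).ne']
      rw [Finset.sum_congr rfl (fun l _ => hterm l), ← Finset.sum_mul, mul_div_assoc]
  have hQknn : ∀ (k : ℕ) (i j : Fin n), 0 ≤ (Q ^ k) i j := by
    intro k
    induction k with
    | zero => intro i j; by_cases h : i = j <;> simp [Matrix.one_apply, h]
    | succ k ih =>
      intro i j
      rw [pow_succ, Matrix.mul_apply]
      exact Finset.sum_nonneg fun l _ => mul_nonneg (ih i l) (hQnn l j)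
  have hSknn : ∀ (k : ℕ) (i j : Fin n), 0 ≤ (S ^ k) i j := fun k i j => by
    rw [hSpow]
    exact div_nonneg (mul_nonneg (hQknn k i j) (hu j).le) (hu i).le
  have hQku : ∀ k : ℕ, (Q ^ k).mulVec u = u := by
    intro k
    induction k with
    | zero => simp
    | succ k ih => rw [pow_succ', ← Matrix.mulVec_mulVec, ih, hQu]
  have hSrow : ∀ (k : ℕ) (i : Fin n), ∑ j, (S ^ k) i j = 1 := by
    intro k i
    have he : ∑ j, (S ^ k) i j = (∑ j, (Q ^ k) i j * u j) / u i := by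
      rw [Finset.sum_div]
      exact Finset.sum_congr rfl fun j _ => hSpow k i j
    have he2 : (Q ^ k).mulVec u i = ∑ j, (Q ^ k) i j * u j := rfl
    rw [he, ← he2, hQku, div_self (hu i).ne']
  -- δ and contraction constant
  set δ : ℝ := Finset.univ.inf' Finset.univ_nonempty
      (fun p : Fin n × Fin n => (S ^ m) p.1 p.2) with hδdef
  have hδpos : 0 < δ := by
    rw [hδdef]
    rw [Finset.lt_inf'_iff]
    intro p _
    rw [hSpow]
    exact div_pos (mul_pos (hQm p.1 p.2) (hu p.2)) (hu p.1)
  have hδle : ∀ i j, δ ≤ (S ^ m) i j := fun i j =>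
    Finset.inf'_le _ (Finset.mem_univ (i, j))
  have hδ1 : δ ≤ 1 := by
    have h1 : (S ^ m) i0 i0 ≤ ∑ j, (S ^ m) i0 j :=
      Finset.single_le_sum (fun j _ => hSknn m i0 j) (Finset.mem_univ i0)
    rw [hSrow] at h1
    linarith [hδle i0 i0]
  -- stationary vector
  set π : Fin n → ℝ := fun j => v j * u j with hπ
  have hπpos : ∀ j, 0 < π j := fun j => mul_pos (hv j) (hu j)
  have hπsum : ∑ j, π j = 1 := by simpa [dotProduct] using hnorm
  have hπS : π ᵥ* S = π := by
    funext j
    have he : (π ᵥ* S) j = ∑ i, π i * S i j := rfl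
    rw [he]
    have hterm : ∀ i, π i * S i j = (v i * Q i j) * u j := by
      intro i
      rw [hπ, hSapp]
      field_simp [(hu i).ne']
    rw [Finset.sum_congr rfl (fun i _ => hterm i), ← Finset.sum_mul]
    have he2 : (v ᵥ* Q) j = ∑ i, v i * Q i j := rfl
    rw [← he2, hvQ]
  have hπSk : ∀ k : ℕ, π ᵥ* (S ^ k) = π := by
    intro k
    induction k with
    | zero => simp
    | succ k ih => rw [pow_succ, ← Matrix.vecMul_vecMul, ih, hπS]
  -- per-column convergence
  have hcol : ∀ j i, Tendsto (fun k => (S ^ k) i j) atTop (nhds (π j)) := by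
    intro j
    set c : ℕ → Fin n → ℝ := fun k i => (S ^ k) i j with hc
    have hstep : ∀ k, c (k + 1) = S.mulVec (c k) := by
      intro k; funext i
      show (S ^ (k + 1)) i j = _
      rw [pow_succ', Matrix.mul_apply]
      rfl
    have hjump : ∀ k, c (m + k) = (S ^ m).mulVec (c k) := by
      intro k; funext i
      show (S ^ (m + k)) i j = _
      rw [pow_add, Matrix.mul_apply]
      rfl
    set g : ℕ → ℝ := fun k => vMax (c k) - vMin (c k) with hg
    have hg0 : ∀ k, 0 ≤ g k := fun k => sub_nonneg.mpr (vMin_le_vMax _)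
    have hgstep : ∀ k, g (k + 1) ≤ g k := by
      intro k
      have hrow1 : ∀ i, ∑ l, S i l = 1 := by
        intro i; simpa using hSrow 1 i
      have hnn1 : ∀ i l, (0:ℝ) ≤ S i l := by
        intro i l; simpa using hSknn 1 i l
      have := osc_step S hrow1 le_rfl hnn1 (c k)
      rw [hg]
      simp only [hstep k]
      simpa using this
    have hganti : ∀ a b : ℕ, a ≤ b → g b ≤ g a := fun a b h =>
      antitone_nat_of_succ_le hgstep h
    set θ : ℝ := 1 - δ with hθ
    have hθ0 : 0 ≤ θ := by rw [hθ]; linarith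
    have hθ1 : θ < 1 := by rw [hθ]; linarith
    have hjumpg : ∀ k, g (m + k) ≤ θ * g k := by
      intro k
      have := osc_step (S ^ m) (hSrow m) hδpos.le hδle (c k)
      rw [hg]
      simp only [hjump k]
      exact this
    have hq : ∀ q : ℕ, g (q * m) ≤ θ ^ q * g 0 := by
      intro q
      induction q with
      | zero => simp
      | succ q ih =>
        have h1 : (q + 1) * m = m + q * m := by ring
        rw [h1]
        calc g (m + q * m) ≤ θ * g (q * m) := hjumpg _
          _ ≤ θ * (θ ^ q * g 0) := mul_le_mul_of_nonneg_left ih hθ0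
          _ = θ ^ (q + 1) * g 0 := by ring
    have hbound : ∀ k, g k ≤ θ ^ (k / m) * g 0 := fun k =>
      (hganti _ _ (Nat.div_mul_le_self k m)).trans (hq (k / m))
    have hgtend : Tendsto g atTop (nhds 0) := by
      apply squeeze_zero hg0 hbound
      have h1 : Tendsto (fun q : ℕ => θ ^ q * g 0) atTop (nhds 0) := by
        simpa using (tendsto_pow_atTop_nhds_zero_of_lt_one hθ0 hθ1).mul_const (g 0)
      have h2 : Tendsto (fun k : ℕ => k / m) atTop atTop :=
        tendsto_atTop_atTop.mpr fun b => ⟨b * m, fun k hk => (Nat.le_div_iff_mul_le hm).mpr hk⟩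
      exact h1.comp h2
    intro i
    have hsand : ∀ k, |c k i - π j| ≤ g k := by
      intro k
      have hπval : π j = ∑ l, π l * c k l := by
        have h := congrFun (hπSk k) j
        rw [← h]; rfl
      have h1 : π j ≤ vMax (c k) := by
        rw [hπval]
        calc ∑ l, π l * c k l ≤ ∑ l, π l * vMax (c k) :=
              Finset.sum_le_sum fun l _ => mul_le_mul_of_nonneg_left (le_vMax _ l) (hπpos l).le
          _ = vMax (c k) := by rw [← Finset.sum_mul, hπsum, one_mul]
      have h2 : vMin (c k) ≤ π j := by
        rw [hπval]
        calc vMin (c k) = ∑ l, π l * vMin (c k) := by rw [← Finset.sum_mul, hπsum, one_mul]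
          _ ≤ ∑ l, π l * c k l :=
              Finset.sum_le_sum fun l _ => mul_le_mul_of_nonneg_left (vMin_le _ l) (hπpos l).le
      have h3 := le_vMax (c k) i
      have h4 := vMin_le (c k) i
      rw [abs_le, hg]
      constructor <;> [skip; skip] <;> simp only [] <;> [linarith; linarith]
    have habs : Tendsto (fun k => |c k i - π j|) atTop (nhds 0) :=
      squeeze_zero (fun k => abs_nonneg _) hsand hgtend
    rw [tendsto_iff_dist_tendsto_zero]
    simpa [Real.dist_eq] using habs
  -- conclude
  refine tendsto_pi_nhds.mpr ?_
  intro i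
  rw [tendsto_pi_nhds]
  intro j
  have h1 : ∀ k : ℕ, (Q ^ k) i j = (S ^ k) i j * (u i / u j) := by
    intro k
    rw [hSpow]
    field_simp [(hu i).ne', (hu j).ne']
  have heq : Matrix.vecMulVec u v i j = π j * (u i / u j) := by
    rw [Matrix.vecMulVec_apply, hπ]
    field_simp [(hu j).ne']
  have hfun : (fun k : ℕ => (Q ^ k) i j) = fun k => (S ^ k) i j * (u i / u j) :=
    funext h1
  show Tendsto (fun k : ℕ => (Q ^ k) i j) atTop (nhds (Matrix.vecMulVec u v i j))
  rw [hfun, heq]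
  exact (hcol j i).mul_const _
end
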